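/- arXiv:1802.02543 — 2 statements merged into one kernel-verified Lean document; each statement's English description precedes it below -/
import Mathlib

section
/- Let α : ℝ → [a,b] ⊂ (0,1) be continuously differentiable with bounded derivative, a₀ ∈ ℝ, and Π ⊂ (t₀,t₁) × ℝ countable with Σ_{(x,y)∈Π} |y|^{-1/b'} < ∞ for some b < b' < 1. Then there exists a unique càdlàg function f ∈ D[t₀,t₁) satisfying f(t) = a₀ + Σ_{(x,y)∈Π} 1_{(t₀,t]}(x) y^⟨−1/α(f(x₋))⟩ for all t ∈ [t₀,t₁). In particular f(t₀) = a₀. -/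
open MeasureTheory Filter Set

noncomputable def spow (r s : ℝ) : ℝ := Real.sign r * |r| ^ s

noncomputable def wab (a b y : ℝ) : ℝ :=
  max (|y| ^ (-1 / a) * (1 + abs (Real.log (abs y)))) (|y| ^ (-1 / b) * (1 + abs (Real.log (abs y))))

noncomputable def Mconst (α : ℝ → ℝ) : ℝ := ⨆ ξ : ℝ, |deriv α ξ| / (α ξ) ^ 2

/-- Càdlàg on `[t₀,t₁)`: right-continuous on `[t₀,t₁)` and left limits exist on `(t₀,t₁]`. -/
def CadlagOn (f : ℝ → ℝ) (t₀ t₁ : ℝ) : Prop :=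
  (∀ u ∈ Set.Ico t₀ t₁, Filter.Tendsto f (nhdsWithin u (Set.Ioi u)) (nhds (f u))) ∧
  (∀ u ∈ Set.Ioc t₀ t₁, ∃ L, Filter.Tendsto f (nhdsWithin u (Set.Iio u)) (nhds L))

/-- The sum `∑_{(x,y)∈Λ} 1_{(t₀,t]}(x) y^⟨-1/α(f(x₋))⟩`. -/
noncomputable def jumpSum (α : ℝ → ℝ) (Λ : Set (ℝ × ℝ)) (t₀ t : ℝ) (f : ℝ → ℝ) : ℝ :=
  ∑' p : Λ, if (p : ℝ × ℝ).1 ∈ Set.Ioc t₀ t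
    then spow (p : ℝ × ℝ).2 (-1 / α (Function.leftLim f (p : ℝ × ℝ).1)) else 0

/-- The truncated sum over points with `|y| ≤ n`. -/
noncomputable def jumpSumTrunc (α : ℝ → ℝ) (Λ : Set (ℝ × ℝ)) (n : ℝ) (t₀ t : ℝ) (f : ℝ → ℝ) : ℝ :=
  ∑' p : Λ, if |(p : ℝ × ℝ).2| ≤ n ∧ (p : ℝ × ℝ).1 ∈ Set.Ioc t₀ t
    then spow (p : ℝ × ℝ).2 (-1 / α (Function.leftLim f (p : ℝ × ℝ).1)) else 0

open scoped Classical

noncomputable def w0 (a b y : ℝ) : ℝ := max (|y| ^ (-1/a)) (|y| ^ (-1/b))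

noncomputable def Wf (a b y : ℝ) : ℝ := (1 + abs (Real.log (abs y))) * w0 a b y

lemma w0_nonneg (a b y : ℝ) : 0 ≤ w0 a b y :=
  le_max_of_le_left (Real.rpow_nonneg (abs_nonneg y) _)

lemma Wf_nonneg (a b y : ℝ) : 0 ≤ Wf a b y :=
  mul_nonneg (by linarith [abs_nonneg (Real.log (abs y))]) (w0_nonneg a b y)

lemma w0_le_Wf (a b y : ℝ) : w0 a b y ≤ Wf a b y :=
  le_mul_of_one_le_left (w0_nonneg a b y) (by linarith [abs_nonneg (Real.log (abs y))])

lemma rpow_neg_inv_le_w0 {a b c : ℝ} (ha : 0 < a) (hc : c ∈ Set.Icc a b) (y : ℝ) :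
    |y| ^ (-1/c) ≤ w0 a b y := by
  have hc0 : 0 < c := lt_of_lt_of_le ha hc.1
  rcases eq_or_ne y 0 with rfl | hy
  · rw [abs_zero, Real.zero_rpow (by positivity : -1/c ≠ 0)]
    exact w0_nonneg a b 0
  · have hy0 : 0 < |y| := abs_pos.2 hy
    rcases le_or_gt 1 |y| with h1 | h1
    · refine le_max_of_le_right (Real.rpow_le_rpow_of_exponent_le h1 ?_)
      rw [neg_div, neg_div, neg_le_neg_iff]
      exact one_div_le_one_div_of_le hc0 hc.2
    · refine le_max_of_le_left (Real.rpow_le_rpow_of_exponent_ge hy0 h1.le ?_)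
      rw [neg_div, neg_div, neg_le_neg_iff]
      exact one_div_le_one_div_of_le ha hc.1

lemma abs_spow_le {a b c : ℝ} (ha : 0 < a) (hc : c ∈ Set.Icc a b) (y : ℝ) :
    |spow y (-1/c)| ≤ w0 a b y := by
  rcases eq_or_ne y 0 with rfl | hy
  · simpa [spow, Real.sign_zero] using w0_nonneg a b 0
  · have : |Real.sign y| = 1 := by
      rcases lt_or_gt_of_ne hy with h | h
      · rw [Real.sign_of_neg h]; simp
      · rw [Real.sign_of_pos h]; simp
    rw [spow, abs_mul, this, one_mul, abs_of_nonneg (Real.rpow_nonneg (abs_nonneg y) _)]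
    exact rpow_neg_inv_le_w0 ha hc y

lemma spow_eq_exp {y : ℝ} (hy : y ≠ 0) (c : ℝ) :
    spow y (-1/c) = Real.sign y * Real.exp (Real.log |y| * (-c⁻¹)) := by
  have hy0 : 0 < |y| := abs_pos.2 hy
  rw [spow, Real.rpow_def_of_pos hy0, neg_div, one_div]

lemma spow_lip {a b C : ℝ} (ha : 0 < a) (α : ℝ → ℝ) (hrange : ∀ x, α x ∈ Set.Icc a b)
    (hsmooth : ContDiff ℝ 1 α) (hC : ∀ x, |deriv α x| ≤ C) (y u v : ℝ) :
    |spow y (-1/α u) - spow y (-1/α v)| ≤ C / a^2 * Wf a b y * |u - v| := by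
  have hC0 : 0 ≤ C := le_trans (abs_nonneg _) (hC 0)
  have hWf := Wf_nonneg a b y
  have ha2 : (0:ℝ) < a^2 := by positivity
  rcases eq_or_ne y 0 with rfl | hy
  · have : spow 0 (-1/α u) = 0 := by simp [spow, Real.sign_zero]
    have h2 : spow 0 (-1/α v) = 0 := by simp [spow, Real.sign_zero]
    rw [this, h2, sub_zero, abs_zero]
    positivity
  · have hy0 : 0 < |y| := abs_pos.2 hy
    have hsgn : |Real.sign y| = 1 := by
      rcases lt_or_gt_of_ne hy with h | h
      · rw [Real.sign_of_neg h]; simp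
      · rw [Real.sign_of_pos h]; simp
    set h : ℝ → ℝ := fun w => Real.sign y * Real.exp (Real.log |y| * (-(α w)⁻¹)) with hh
    have hα : ∀ w, HasDerivAt α (deriv α w) w := fun w =>
      ((hsmooth.differentiable one_ne_zero) w).hasDerivAt
    have hαa : ∀ w, a ≤ α w := fun w => (hrange w).1
    have hαne : ∀ w, α w ≠ 0 := fun w => ne_of_gt (lt_of_lt_of_le ha (hαa w))
    have hd : ∀ w, HasDerivAt h
        (Real.sign y * (Real.exp (Real.log |y| * (-(α w)⁻¹)) *
          (Real.log |y| * (deriv α w / (α w)^2)))) w := by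
      intro w
      have h1 : HasDerivAt (fun z => -(α z)⁻¹) (deriv α w / (α w)^2) w := by
        have := ((hα w).inv (hαne w)).neg
        rw [neg_div, neg_neg] at this
        exact this
      exact ((h1.const_mul (Real.log |y|)).exp).const_mul _
    have hbound : ∀ w, ‖deriv h w‖ ≤ C / a^2 * Wf a b y := by
      intro w
      rw [(hd w).deriv, Real.norm_eq_abs, abs_mul, hsgn, one_mul, abs_mul]
      have e1 : |Real.exp (Real.log |y| * (-(α w)⁻¹))| ≤ w0 a b y := by
        rw [abs_of_nonneg (Real.exp_nonneg _)]
        have : Real.exp (Real.log |y| * (-(α w)⁻¹)) = |y| ^ (-1/α w) := by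
          rw [Real.rpow_def_of_pos hy0, neg_div, one_div]
        rw [this]; exact rpow_neg_inv_le_w0 ha (hrange w) y
      have e2 : |Real.log |y| * (deriv α w / (α w)^2)| ≤ abs (Real.log (abs y)) * (C / a^2) := by
        rw [abs_mul]
        refine mul_le_mul_of_nonneg_left ?_ (abs_nonneg _)
        rw [abs_div, abs_of_nonneg (sq_nonneg (α w))]
        refine div_le_div₀ hC0 (hC w) ha2 ?_
        exact pow_le_pow_left₀ ha.le (hαa w) 2
      calc |Real.exp (Real.log |y| * (-(α w)⁻¹))| * |Real.log |y| * (deriv α w / (α w)^2)|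
          ≤ w0 a b y * (abs (Real.log (abs y)) * (C / a^2)) := by
            refine mul_le_mul e1 e2 (abs_nonneg _) (w0_nonneg a b y)
        _ ≤ C / a^2 * Wf a b y := by
            rw [Wf]
            have h0 := w0_nonneg a b y
            have h1 := abs_nonneg (Real.log (abs y))
            nlinarith [mul_nonneg (div_nonneg hC0 ha2.le) h0]
    have key : ‖h u - h v‖ ≤ C / a^2 * Wf a b y * ‖u - v‖ := by
      refine Convex.norm_image_sub_le_of_norm_deriv_le
        (fun x _ => (hd x).differentiableAt) (fun x _ => hbound x) convex_univ trivial trivial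
    rw [spow_eq_exp hy (α u), spow_eq_exp hy (α v)]
    simpa [hh, Real.norm_eq_abs] using key


lemma exists_R {ε : ℝ} (hε : 0 < ε) : ∃ R : ℝ, 1 ≤ R ∧ ∀ t, R ≤ t → 1 + Real.log t ≤ t ^ (2*ε) := by
  refine ⟨max 1 ((1+1/ε) ^ (1/ε)), le_max_left _ _, fun t ht => ?_⟩
  have ht1 : (1:ℝ) ≤ t := le_trans (le_max_left _ _) ht
  have ht0 : (0:ℝ) < t := lt_of_lt_of_le one_pos ht1
  set A := t ^ ε with hA
  have hA1 : 1 ≤ A := Real.one_le_rpow ht1 hε.le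
  have hA0 : 0 < A := lt_of_lt_of_le one_pos hA1
  have hlog : ε * Real.log t ≤ A - 1 := by
    have := Real.log_le_sub_one_of_pos (Real.rpow_pos_of_pos ht0 ε)
    rwa [Real.log_rpow ht0] at this
  have hR0 : 1 + 1/ε ≤ A := by
    have h1 : ((1+1/ε) ^ (1/ε)) ^ ε ≤ A := by
      rw [hA]
      refine Real.rpow_le_rpow (Real.rpow_nonneg (by positivity) _)
        (le_trans (le_max_right _ _) ht) hε.le
    calc 1 + 1/ε = ((1+1/ε) ^ (1/ε)) ^ ε := by
          rw [← Real.rpow_mul (by positivity), one_div, inv_mul_cancel₀ hε.ne', Real.rpow_one]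
        _ ≤ A := h1
  have ht2e : t ^ (2*ε) = A * A := by
    rw [hA, ← Real.rpow_add ht0]; ring_nf
  rw [ht2e]
  have h2 : ε * (1 + 1/ε) = ε + 1 := by field_simp
  have hεA : ε + 1 ≤ ε * A := by
    have := mul_le_mul_of_nonneg_left hR0 hε.le
    linarith [this, h2.symm.le]
  nlinarith [mul_le_mul_of_nonneg_right hεA hA0.le, hA1, hε, hlog]

lemma summable_Wf {a b b' : ℝ} (ha : 0 < a) (hab : a ≤ b) (hbb' : b < b')
    {ι : Type*} (Y : ι → ℝ) (hsum : Summable fun i => |Y i| ^ (-1/b')) :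
    Summable fun i => Wf a b (Y i) := by
  have hb0 : 0 < b := lt_of_lt_of_le ha hab
  have hb'0 : 0 < b' := lt_trans hb0 hbb'
  set ε := (1/b - 1/b')/2 with hε
  have hε0 : 0 < ε := by
    have : 1/b' < 1/b := one_div_lt_one_div_of_lt hb0 hbb'
    rw [hε]; linarith
  obtain ⟨R, hR1, hR⟩ := exists_R hε0
  have hR0 : (0:ℝ) < R := lt_of_lt_of_le one_pos hR1
  set E : Set ι := {i | Y i ≠ 0 ∧ |Y i| < R} with hE
  have hEfin : E.Finite := by
    have h1 : ∀ᶠ i in cofinite, |Y i| ^ (-1/b') < R ^ (-1/b') :=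
      hsum.tendsto_cofinite_zero.eventually_lt_const (Real.rpow_pos_of_pos hR0 _)
    rw [eventually_cofinite] at h1
    refine h1.subset ?_
    intro i hi
    simp only [hE, mem_setOf_eq] at hi
    have hY0 : 0 < |Y i| := abs_pos.2 hi.1
    have : R ^ (-1/b') ≤ |Y i| ^ (-1/b') :=
      Real.rpow_le_rpow_of_nonpos hY0 hi.2.le (by rw [neg_div]; exact neg_nonpos.mpr (by positivity))
    simp only [mem_setOf_eq, not_lt]
    exact this
  have hbound : ∀ i, Wf a b (Y i) ≤ E.indicator (fun i => Wf a b (Y i)) i + |Y i| ^ (-1/b') := by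
    intro i
    by_cases hiE : i ∈ E
    · rw [Set.indicator_of_mem hiE]
      have : (0:ℝ) ≤ |Y i| ^ (-1/b') := Real.rpow_nonneg (abs_nonneg _) _
      linarith
    · rw [Set.indicator_of_notMem hiE, zero_add]
      simp only [hE, mem_setOf_eq, not_and, not_lt] at hiE
      rcases eq_or_ne (Y i) 0 with h0 | h0
      · have : Wf a b (Y i) = 0 := by
          rw [h0, Wf, w0]
          rw [abs_zero, Real.zero_rpow (by positivity : -1/a ≠ 0),
            Real.zero_rpow (by positivity : -1/b ≠ 0)]
          simp
        rw [this]
        have : (0:ℝ) ≤ |Y i| ^ (-1/b') := Real.rpow_nonneg (abs_nonneg _) _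
        linarith
      · have hYR : R ≤ |Y i| := hiE h0
        have hY1 : 1 ≤ |Y i| := le_trans hR1 hYR
        have hY0 : 0 < |Y i| := lt_of_lt_of_le one_pos hY1
        have hw0 : w0 a b (Y i) = |Y i| ^ (-1/b) := by
          rw [w0, max_eq_right]
          refine Real.rpow_le_rpow_of_exponent_le hY1 ?_
          rw [neg_div, neg_div, neg_le_neg_iff]
          exact one_div_le_one_div_of_le ha hab
        have hlogpos : abs (Real.log (abs (Y i))) = Real.log (abs (Y i)) :=
          abs_of_nonneg (Real.log_nonneg hY1)
        rw [Wf, hw0, hlogpos]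
        have h2 : 1 + Real.log |Y i| ≤ |Y i| ^ (2*ε) := hR _ hYR
        calc (1 + Real.log |Y i|) * |Y i| ^ (-1/b)
            ≤ |Y i| ^ (2*ε) * |Y i| ^ (-1/b) :=
              mul_le_mul_of_nonneg_right h2 (Real.rpow_nonneg (abs_nonneg _) _)
          _ = |Y i| ^ (2*ε + -1/b) := (Real.rpow_add hY0 _ _).symm
          _ = |Y i| ^ (-1/b') := by
              congr 1
              rw [hε]; ring
  refine Summable.of_nonneg_of_le (fun i => Wf_nonneg a b (Y i)) hbound (Summable.add ?_ hsum)
  refine summable_of_ne_finset_zero (s := hEfin.toFinset) (fun i hi => ?_)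
  exact Set.indicator_of_notMem (by simpa using hi) _


lemma sum_lt_S {ι : Type*} (x : ι → ℝ) (L : ι → ℝ) (hL : ∀ i, 0 ≤ L i) (hsum : Summable L)
    (S : ℝ → ℝ) (hS : ∀ t, S t = ∑' i, Set.indicator {i | x i < t} L i)
    {t' t : ℝ} (htt : t' < t) (F₁ : Finset ι) (hF₁ : ∀ i ∈ F₁, x i = t') :
    S t' + ∑ i ∈ F₁, L i ≤ S t := by
  have h1 : S t' + ∑ i ∈ F₁, L i
      = ∑' i, (Set.indicator {i | x i < t'} L i + (↑F₁ : Set ι).indicator L i) := by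
    rw [Summable.tsum_add (hsum.indicator _) (hsum.indicator _), hS t', sum_eq_tsum_indicator]
  rw [h1, hS t]
  refine Summable.tsum_le_tsum ?_ ((hsum.indicator _).add (hsum.indicator _)) (hsum.indicator _)
  intro i
  simp only [Set.indicator_apply, Finset.mem_coe, mem_setOf_eq]
  by_cases hi : i ∈ F₁
  · have hx' : x i = t' := hF₁ i hi
    rw [if_neg (by rw [hx']; exact lt_irrefl t'), if_pos hi,
      if_pos (by rw [hx']; exact htt), zero_add]
  · rw [if_neg hi, add_zero]
    by_cases hx : x i < t'
    · rw [if_pos hx, if_pos (hx.trans htt)]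
    · rw [if_neg hx]
      split
      · exact hL i
      · exact le_refl 0

lemma key_sum {ι : Type*} (x : ι → ℝ) (L : ι → ℝ) (hL : ∀ i, 0 ≤ L i) (hsum : Summable L)
    (S : ℝ → ℝ) (hS : ∀ t, S t = ∑' i, Set.indicator {i | x i < t} L i) :
    ∀ (F : Finset ι) (t : ℝ), (∀ i ∈ F, x i < t) →
      ∑ i ∈ F, L i * Real.exp (2 * S (x i)) ≤ (Real.exp (2 * S t) - 1) / 2 := by
  have hSnn : ∀ t, 0 ≤ S t := fun t => by
    rw [hS t]; exact tsum_nonneg (fun i => Set.indicator_nonneg (fun j _ => hL j) i)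
  intro F
  induction F using Finset.strongInduction with
  | _ F ih =>
    intro t hF
    rcases F.eq_empty_or_nonempty with rfl | hne
    · simp only [Finset.sum_empty]
      have h1 : (1:ℝ) ≤ Real.exp (2 * S t) := by
        rw [← Real.exp_zero]; exact Real.exp_le_exp.2 (by linarith [hSnn t])
      linarith
    · have hne' : (F.image x).Nonempty := hne.image x
      set m := (F.image x).max' hne' with hm
      obtain ⟨i₀, hi₀F, hi₀⟩ := Finset.mem_image.1 ((F.image x).max'_mem hne')
      have hmt : m < t := by rw [hm, ← hi₀]; exact hF i₀ hi₀F
      set F₁ := F.filter (fun i => x i = m) with hF₁d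
      set F₂ := F.filter (fun i => ¬ x i = m) with hF₂d
      have hsplit : ∑ i ∈ F, L i * Real.exp (2 * S (x i))
          = ∑ i ∈ F₁, L i * Real.exp (2 * S (x i)) + ∑ i ∈ F₂, L i * Real.exp (2 * S (x i)) :=
        (Finset.sum_filter_add_sum_filter_not F _ _).symm
      set d := ∑ i ∈ F₁, L i with hdd
      have hd0 : 0 ≤ d := Finset.sum_nonneg (fun i _ => hL i)
      have hsum1 : ∑ i ∈ F₁, L i * Real.exp (2 * S (x i)) = d * Real.exp (2 * S m) := by
        rw [hdd, Finset.sum_mul]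
        refine Finset.sum_congr rfl (fun i hi => ?_)
        rw [(Finset.mem_filter.1 hi).2]
      have hA : S m + d ≤ S t := sum_lt_S x L hL hsum S hS hmt F₁
        (fun i hi => (Finset.mem_filter.1 hi).2)
      have hssub : F₂ ⊂ F := by
        rw [hF₂d, Finset.filter_ssubset]
        exact ⟨i₀, hi₀F, by simp [hi₀, hm]⟩
      have hF₂lt : ∀ i ∈ F₂, x i < m := by
        intro i hi
        obtain ⟨hiF, hix⟩ := Finset.mem_filter.1 hi
        exact lt_of_le_of_ne (Finset.le_max' _ _ (Finset.mem_image_of_mem x hiF)) hix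
      have h2 := ih F₂ hssub m hF₂lt
      rw [hsplit, hsum1]
      have hexp1 : Real.exp (2 * S m) * Real.exp (2 * d) = Real.exp (2 * S m + 2 * d) :=
        (Real.exp_add _ _).symm
      have hexp2 : Real.exp (2 * S m + 2 * d) ≤ Real.exp (2 * S t) :=
        Real.exp_le_exp.2 (by linarith)
      have hexp3 : (2 * d + 1) ≤ Real.exp (2 * d) := by
        have := Real.add_one_le_exp (2 * d); linarith
      have hexp4 : (2 * d + 1) * Real.exp (2 * S m) ≤ Real.exp (2 * d) * Real.exp (2 * S m) :=
        mul_le_mul_of_nonneg_right hexp3 (Real.exp_pos _).le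
      nlinarith [Real.exp_pos (2 * S m)]


lemma summable_of_abs_le {ι : Type*} {w d : ι → ℝ} (hw : Summable w) (hd : ∀ i, |d i| ≤ w i) :
    Summable d := by
  refine Summable.of_norm (Summable.of_nonneg_of_le (fun i => norm_nonneg _) (fun i => ?_) hw)
  rw [Real.norm_eq_abs]; exact hd i

lemma tsum_dif_bound {ι : Type*} (w : ι → ℝ) (hw : Summable w) (d : ι → ℝ) (T : Finset ι)
    (hd : ∀ i, |d i| ≤ w i) (hT : ∀ i ∈ T, d i = 0) :
    |∑' i, d i| ≤ ∑' (i : {j // j ∉ T}), w (i : ι) := by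
  have hsumd : Summable d := summable_of_abs_le hw hd
  have hwnn : ∀ i, 0 ≤ w i := fun i => le_trans (abs_nonneg (d i)) (hd i)
  have hg : Summable fun i => if i ∈ T then 0 else w i := by
    refine summable_of_abs_le hw (fun i => ?_)
    split
    · simpa using hwnn i
    · rw [abs_of_nonneg (hwnn i)]
  calc |∑' i, d i| ≤ ∑' i, |d i| := by
        rw [← Real.norm_eq_abs]
        refine (norm_tsum_le_tsum_norm ?_).trans_eq (by simp [Real.norm_eq_abs])
        refine Summable.of_nonneg_of_le (fun i => norm_nonneg _) (fun i => ?_) hw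
        rw [Real.norm_eq_abs]; exact hd i
    _ ≤ ∑' i, if i ∈ T then 0 else w i := by
        refine Summable.tsum_le_tsum (fun i => ?_) hsumd.abs hg
        split
        · next h => rw [hT i h, abs_zero]
        · exact hd i
    _ = ∑' (i : {j // j ∉ T}), w (i : ι) := by
        rw [show (∑' (i : {j // j ∉ T}), w (i : ι))
            = ∑' i, Set.indicator {j | j ∉ T} w i from tsum_subtype _ _]
        exact tsum_congr fun i => by by_cases hi : i ∈ T <;> simp [hi, Set.indicator_apply]

lemma exists_tail_small {ι : Type*} {w : ι → ℝ} {ε : ℝ} (hε : 0 < ε) :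
    ∃ T : Finset ι, ∑' (i : {j // j ∉ T}), w (i : ι) < ε :=
  ((tendsto_tsum_compl_atTop_zero w).eventually (gt_mem_nhds hε)).exists

lemma summable_cond {ι : Type*} {w : ι → ℝ} (hw : Summable w) (c : ι → ℝ)
    (hb : ∀ i, |c i| ≤ w i) (P : ι → Prop) :
    Summable fun i => if P i then c i else 0 := by
  refine summable_of_abs_le hw (fun i => ?_)
  split
  · exact hb i
  · simpa using le_trans (abs_nonneg (c i)) (hb i)

lemma jump_right_tendsto {ι : Type*} (x c w : ι → ℝ) (hw : Summable w)
    (hb : ∀ i, |c i| ≤ w i) (t : ℝ) :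
    Tendsto (fun s => ∑' i, if x i ≤ s then c i else 0) (nhdsWithin t (Set.Ioi t))
      (nhds (∑' i, if x i ≤ t then c i else 0)) := by
  rw [Metric.tendsto_nhdsWithin_nhds]
  intro ε hε
  obtain ⟨T, hT⟩ := exists_tail_small (w := w) hε
  set T' := T.filter (fun i => t < x i) with hT'
  refine ⟨if h : T'.Nonempty then (T'.image x).min' (h.image x) - t else 1, ?_, ?_⟩
  · split
    · next h =>
      have hmem := Finset.min'_mem (T'.image x) (h.image x)
      obtain ⟨j, hj, hjx⟩ := Finset.mem_image.1 hmem
      have h2 : t < x j := (Finset.mem_filter.1 hj).2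
      rw [hjx] at h2
      linarith
    · exact one_pos
  · intro s hs hdist
    have hst : t < s := hs
    rw [Real.dist_eq, abs_of_pos (by linarith : (0:ℝ) < s - t)] at hdist
    rw [Real.dist_eq, ← Summable.tsum_sub (summable_cond hw c hb _) (summable_cond hw c hb _)]
    refine lt_of_le_of_lt (tsum_dif_bound w hw _ T (fun i => ?_) (fun i hi => ?_)) hT
    · by_cases h1 : x i ≤ s <;> by_cases h2 : x i ≤ t
      · rw [if_pos h1, if_pos h2, sub_self, abs_zero]; exact le_trans (abs_nonneg _) (hb i)
      · rw [if_pos h1, if_neg h2, sub_zero]; exact hb i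
      · exact absurd (h2.trans hst.le) h1
      · rw [if_neg h1, if_neg h2, sub_self, abs_zero]; exact le_trans (abs_nonneg _) (hb i)
    · by_cases h2 : x i ≤ t
      · rw [if_pos (le_trans h2 hst.le), if_pos h2, sub_self]
      · have hiT' : i ∈ T' := Finset.mem_filter.2 ⟨hi, lt_of_not_ge h2⟩
        have hne : T'.Nonempty := ⟨i, hiT'⟩
        rw [dif_pos hne] at hdist
        have hmin : (T'.image x).min' (hne.image x) ≤ x i :=
          Finset.min'_le _ _ (Finset.mem_image_of_mem x hiT')
        have h3 : ¬ x i ≤ s := by push_neg; linarith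
        rw [if_neg h3, if_neg h2, sub_self]

lemma jump_left_tendsto {ι : Type*} (x c w : ι → ℝ) (hw : Summable w)
    (hb : ∀ i, |c i| ≤ w i) (t : ℝ) :
    Tendsto (fun s => ∑' i, if x i ≤ s then c i else 0) (nhdsWithin t (Set.Iio t))
      (nhds (∑' i, if x i < t then c i else 0)) := by
  rw [Metric.tendsto_nhdsWithin_nhds]
  intro ε hε
  obtain ⟨T, hT⟩ := exists_tail_small (w := w) hε
  set T' := T.filter (fun i => x i < t) with hT'
  refine ⟨if h : T'.Nonempty then t - (T'.image x).max' (h.image x) else 1, ?_, ?_⟩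
  · split
    · next h =>
      have hmem := Finset.max'_mem (T'.image x) (h.image x)
      obtain ⟨j, hj, hjx⟩ := Finset.mem_image.1 hmem
      have h2 : x j < t := (Finset.mem_filter.1 hj).2
      rw [hjx] at h2
      linarith
    · exact one_pos
  · intro s hs hdist
    have hst : s < t := hs
    rw [Real.dist_eq, abs_of_neg (by linarith : s - t < (0:ℝ)), neg_sub] at hdist
    rw [Real.dist_eq, ← Summable.tsum_sub (summable_cond hw c hb _) (summable_cond hw c hb _)]
    refine lt_of_le_of_lt (tsum_dif_bound w hw _ T (fun i => ?_) (fun i hi => ?_)) hT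
    · by_cases h1 : x i ≤ s <;> by_cases h2 : x i < t
      · rw [if_pos h1, if_pos h2, sub_self, abs_zero]; exact le_trans (abs_nonneg _) (hb i)
      · exact absurd (lt_of_le_of_lt h1 hst) h2
      · rw [if_neg h1, if_pos h2, zero_sub, abs_neg]; exact hb i
      · rw [if_neg h1, if_neg h2, sub_self, abs_zero]; exact le_trans (abs_nonneg _) (hb i)
    · by_cases h2 : x i < t
      · have hiT' : i ∈ T' := Finset.mem_filter.2 ⟨hi, h2⟩
        have hne : T'.Nonempty := ⟨i, hiT'⟩
        rw [dif_pos hne] at hdist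
        have hmax : x i ≤ (T'.image x).max' (hne.image x) :=
          Finset.le_max' _ _ (Finset.mem_image_of_mem x hiT')
        have h3 : x i ≤ s := by linarith
        rw [if_pos h3, if_pos h2, sub_self]
      · have h3 : ¬ x i ≤ s := fun h => h2 (lt_of_le_of_lt h hst)
        rw [if_neg h3, if_neg h2, sub_self]

lemma abs_tsum_le_tsum {ι : Type*} {d G : ι → ℝ} (hG : Summable G) (h : ∀ i, |d i| ≤ G i) :
    |∑' i, d i| ≤ ∑' i, G i := by
  have hsd : Summable d := summable_of_abs_le hG h
  calc |∑' i, d i| ≤ ∑' i, |d i| := by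
        rw [← Real.norm_eq_abs]
        refine (norm_tsum_le_tsum_norm ?_).trans_eq (by simp [Real.norm_eq_abs])
        refine Summable.of_nonneg_of_le (fun i => norm_nonneg _) (fun i => ?_) hG
        rw [Real.norm_eq_abs]; exact h i
    _ ≤ ∑' i, G i := Summable.tsum_le_tsum h hsd.abs hG

noncomputable def jumpSumF {ι : Type*} (xc cc : ι → ℝ) (a₀ : ℝ) : ℝ → ℝ :=
  fun t => a₀ + ∑' p, if xc p ≤ t then cc p else 0


lemma fixed_point_exists (S : ℝ → ℝ) (E : ℝ) (hE0 : 0 < E)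
    (hexp1 : ∀ t, 1 ≤ Real.exp (2 * S t)) (hexpE : ∀ t, Real.exp (2 * S t) ≤ E)
    (Φ : (ℝ → ℝ) → ℝ → ℝ) (a₀ Dtot : ℝ) (hDnn : 0 ≤ Dtot)
    (hΦbd : ∀ (u : ℝ → ℝ) (t : ℝ), |Φ u t - a₀| ≤ Dtot)
    (hcontr : ∀ (u v : ℝ → ℝ) (c : ℝ), 0 ≤ c →
      (∀ s, |u s - v s| ≤ c * Real.exp (2 * S s)) →
      ∀ t, |Φ u t - Φ v t| ≤ c / 2 * Real.exp (2 * S t)) :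
    ∃ uu : ℝ → ℝ, (∀ t, Φ uu t = uu t) ∧
      ∀ v : ℝ → ℝ, (∀ s, Φ v s = v s) → ∀ s, v s = uu s := by
  set un : ℕ → ℝ → ℝ := fun n => Φ^[n] (fun _ => a₀) with hun
  have hun0 : un 0 = fun _ => a₀ := rfl
  have hunS : ∀ n, un (n + 1) = Φ (un n) := fun n => Function.iterate_succ_apply' Φ n _
  have hdiffn : ∀ n t, |un (n + 1) t - un n t| ≤ Dtot * (1 / 2) ^ n * Real.exp (2 * S t) := by
    intro n
    induction n with
    | zero =>
      intro t
      have h1 : |un (0 + 1) t - un 0 t| ≤ Dtot := by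
        rw [hunS 0, hun0]
        exact hΦbd _ t
      have := hexp1 t
      calc |un (0 + 1) t - un 0 t| ≤ Dtot := h1
        _ ≤ Dtot * (1/2)^0 * Real.exp (2 * S t) := by
            rw [pow_zero, mul_one]
            nlinarith
    | succ n ihn =>
      intro t
      have := hcontr (un (n+1)) (un n) (Dtot * (1/2)^n) (by positivity) ihn t
      rw [hunS (n+1), congrFun (hunS n) t]
      calc |Φ (un (n+1)) t - Φ (un n) t| ≤ Dtot * (1/2)^n / 2 * Real.exp (2 * S t) := this
        _ = Dtot * (1/2)^(n+1) * Real.exp (2 * S t) := by ring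
  have hgeo : ∀ t n, dist (un n t) (un (n + 1) t) ≤ (Dtot * E) * (1 / 2) ^ n := by
    intro t n
    rw [Real.dist_eq, abs_sub_comm]
    calc |un (n+1) t - un n t| ≤ Dtot * (1/2)^n * Real.exp (2 * S t) := hdiffn n t
      _ ≤ Dtot * (1/2)^n * E := by
          refine mul_le_mul_of_nonneg_left (hexpE t) (by positivity)
      _ = (Dtot * E) * (1/2)^n := by ring
  have hcau : ∀ t, CauchySeq (fun n => un n t) := fun t =>
    cauchySeq_of_le_geometric (1/2) (Dtot * E) (by norm_num) (hgeo t)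
  set uu : ℝ → ℝ := fun t => limUnder atTop (fun n => un n t) with huu
  have htendu : ∀ t, Tendsto (fun n => un n t) atTop (nhds (uu t)) := fun t =>
    (hcau t).tendsto_limUnder
  have hunif : ∀ n t, dist (un n t) (uu t) ≤ (Dtot * E) * (1/2)^n / (1 - 1/2) := by
    intro n t
    exact dist_le_of_le_geometric_of_tendsto (1/2) (Dtot * E) (by norm_num) (hgeo t) (htendu t) n
  have hfix : ∀ t, Φ uu t = uu t := by
    intro t
    have h1 : Tendsto (fun n => un (n + 1) t) atTop (nhds (uu t)) :=
      (htendu t).comp (tendsto_add_atTop_nat 1)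
    have h2 : Tendsto (fun n => un (n + 1) t) atTop (nhds (Φ uu t)) := by
      rw [tendsto_iff_dist_tendsto_zero]
      refine squeeze_zero (fun n => dist_nonneg) (fun n => ?_)
        (g := fun n => ((Dtot * E) * (1/2)^n / (1 - 1/2)) / 2 * E) ?_
      · rw [hunS n, dist_comm, Real.dist_eq]
        have hb : ∀ s, |uu s - un n s| ≤ ((Dtot * E) * (1/2)^n / (1 - 1/2)) * Real.exp (2 * S s) := by
          intro s
          have h4 := hunif n s
          rw [dist_comm, Real.dist_eq] at h4
          have h5 := hexp1 s
          have h6 : 0 ≤ (Dtot * E) * (1/2)^n / (1 - 1/2) := by positivity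
          nlinarith
        have := hcontr uu (un n) ((Dtot * E) * (1/2)^n / (1 - 1/2)) (by positivity) hb t
        calc |Φ uu t - Φ (un n) t| ≤ ((Dtot * E) * (1/2)^n / (1 - 1/2)) / 2 * Real.exp (2 * S t) := this
          _ ≤ ((Dtot * E) * (1/2)^n / (1 - 1/2)) / 2 * E :=
              mul_le_mul_of_nonneg_left (hexpE t) (by positivity)
      · have h8 : Tendsto (fun n : ℕ => ((1:ℝ)/2)^n) atTop (nhds 0) :=
          tendsto_pow_atTop_nhds_zero_of_lt_one (by norm_num) (by norm_num)
        have h7 := h8.const_mul ((Dtot * E) / (1 - 1/2) / 2 * E)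
        rw [mul_zero] at h7
        refine h7.congr (fun n => by ring)
    exact tendsto_nhds_unique h2 h1
  refine ⟨uu, hfix, ?_⟩
  intro v hv s
  have hvb : ∀ s, |v s - a₀| ≤ Dtot := fun s => by rw [← hv s]; exact hΦbd v s
  have hub : ∀ s, |uu s - a₀| ≤ Dtot := fun s => by rw [← hfix s]; exact hΦbd uu s
  have hstep : ∀ n s, |v s - uu s| ≤ (2 * Dtot) * (1/2)^n * Real.exp (2 * S s) := by
    intro n
    induction n with
    | zero =>
      intro s
      have h1 := hvb s
      have h2 := hub s
      have h3 := hexp1 s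
      have h4 : |v s - uu s| ≤ 2 * Dtot := by
        have := abs_sub (v s - a₀) (uu s - a₀)
        have heq : (v s - a₀) - (uu s - a₀) = v s - uu s := by ring
        rw [heq] at this
        linarith
      rw [pow_zero, mul_one]
      nlinarith
    | succ n ihn =>
      intro s
      have := hcontr v uu ((2 * Dtot) * (1/2)^n) (by positivity) ihn s
      rw [hv s, hfix s] at this
      calc |v s - uu s| ≤ (2 * Dtot) * (1/2)^n / 2 * Real.exp (2 * S s) := this
        _ = (2 * Dtot) * (1/2)^(n+1) * Real.exp (2 * S s) := by ring
  have hlim : Tendsto (fun n : ℕ => (2 * Dtot) * E * (1/2)^n) atTop (nhds 0) := by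
    have h8 : Tendsto (fun n : ℕ => ((1:ℝ)/2)^n) atTop (nhds 0) :=
      tendsto_pow_atTop_nhds_zero_of_lt_one (by norm_num) (by norm_num)
    have h7 := h8.const_mul ((2 * Dtot) * E)
    rwa [mul_zero] at h7
  have hle : |v s - uu s| ≤ 0 := by
    refine ge_of_tendsto' hlim (fun n => ?_)
    calc |v s - uu s| ≤ (2 * Dtot) * (1/2)^n * Real.exp (2 * S s) := hstep n s
      _ ≤ (2 * Dtot) * (1/2)^n * E := mul_le_mul_of_nonneg_left (hexpE s) (by positivity)
      _ = (2 * Dtot) * E * (1/2)^n := by ring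
  have h9 := abs_nonneg (v s - uu s)
  have h10 : |v s - uu s| = 0 := le_antisymm hle h9
  exact sub_eq_zero.1 (abs_eq_zero.1 h10)

set_option maxHeartbeats 2000000 in
/-- Existence and uniqueness of the càdlàg solution of the self-stabilizing equation;
in particular f(t₀) = a₀. -/
theorem stmt4 (a b b' t₀ t₁ a₀ : ℝ) (ha : 0 < a) (hab : a < b) (hbb' : b < b') (hb1 : b' < 1)
    (ht : t₀ < t₁)
    (α : ℝ → ℝ) (hrange : ∀ x, α x ∈ Set.Icc a b) (hsmooth : ContDiff ℝ 1 α)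
    (hbd : ∃ C, ∀ x, |deriv α x| ≤ C)
    (Λ : Set (ℝ × ℝ)) (hcount : Λ.Countable)
    (hsubΛ : Λ ⊆ Set.Ioo t₀ t₁ ×ˢ (Set.univ : Set ℝ))
    (hΛ : Summable fun p : Λ => |(p : ℝ × ℝ).2| ^ (-1 / b')) :
    ∃ f : ℝ → ℝ, CadlagOn f t₀ t₁ ∧
      (∀ t ∈ Set.Ico t₀ t₁, f t = a₀ + jumpSum α Λ t₀ t f) ∧
      f t₀ = a₀ ∧
      ∀ g : ℝ → ℝ, CadlagOn g t₀ t₁ →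
        (∀ t ∈ Set.Ico t₀ t₁, g t = a₀ + jumpSum α Λ t₀ t g) →
        Set.EqOn g f (Set.Ico t₀ t₁) := by
  obtain ⟨C, hC⟩ := hbd
  have hC0 : 0 ≤ C := le_trans (abs_nonneg _) (hC 0)
  set xc : Λ → ℝ := fun p => (p : ℝ × ℝ).1 with hxc
  set yc : Λ → ℝ := fun p => (p : ℝ × ℝ).2 with hyc
  have hx0 : ∀ p : Λ, xc p ∈ Set.Ioo t₀ t₁ := fun p => (hsubΛ p.2).1
  set J : ℝ → ℝ → ℝ := fun y u => spow y (-1 / α u) with hJ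
  set W : Λ → ℝ := fun p => Wf a b (yc p) with hW
  have hWnn : ∀ p, 0 ≤ W p := fun p => Wf_nonneg a b (yc p)
  have hWsum : Summable W := summable_Wf ha hab.le hbb' (fun p : Λ => yc p) hΛ
  set K : ℝ := C / a ^ 2 with hK
  have hK0 : 0 ≤ K := by positivity
  set L : Λ → ℝ := fun p => K * W p with hL
  have hLnn : ∀ p, 0 ≤ L p := fun p => mul_nonneg hK0 (hWnn p)
  have hLsum : Summable L := hWsum.mul_left K
  have hJb : ∀ (p : Λ) (u : ℝ), |J (yc p) u| ≤ W p := fun p u =>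
    (abs_spow_le ha (hrange u) (yc p)).trans (w0_le_Wf a b (yc p))
  have hJlip : ∀ (p : Λ) (u v : ℝ), |J (yc p) u - J (yc p) v| ≤ L p * |u - v| := by
    intro p u v
    have := spow_lip ha α hrange hsmooth hC (yc p) u v
    simpa [hJ, hL, hW, hK, mul_assoc] using this
  set S : ℝ → ℝ := fun t => ∑' p, Set.indicator {q : Λ | xc q < t} L p with hS
  have hSnn : ∀ t, 0 ≤ S t := fun t =>
    tsum_nonneg (fun p => Set.indicator_nonneg (fun q _ => hLnn q) p)
  set Ltot : ℝ := ∑' p, L p with hLtot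
  have hSle : ∀ t, S t ≤ Ltot := by
    intro t
    refine Summable.tsum_le_tsum (fun p => ?_) (hLsum.indicator _) hLsum
    by_cases h : xc p < t
    · rw [Set.indicator_of_mem (show p ∈ {q : Λ | xc q < t} from h)]
    · rw [Set.indicator_of_notMem (show p ∉ {q : Λ | xc q < t} from h)]
      exact hLnn p
  set E : ℝ := Real.exp (2 * Ltot) with hE
  have hexpE : ∀ t, Real.exp (2 * S t) ≤ E := fun t =>
    Real.exp_le_exp.2 (by linarith [hSle t])
  have hexp1 : ∀ t, 1 ≤ Real.exp (2 * S t) := fun t => by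
    rw [← Real.exp_zero]; exact Real.exp_le_exp.2 (by linarith [hSnn t])
  have hE0 : 0 < E := Real.exp_pos _
  set Φ : (ℝ → ℝ) → ℝ → ℝ :=
    fun u t => a₀ + ∑' p, if xc p < t then J (yc p) (u (xc p)) else 0 with hΦ
  have hsummand : ∀ (u : ℝ → ℝ) (t : ℝ),
      Summable fun p => if xc p < t then J (yc p) (u (xc p)) else 0 := fun u t =>
    summable_cond hWsum _ (fun p => hJb p _) _
  -- contraction estimate
  have hcontr : ∀ (u v : ℝ → ℝ) (c : ℝ), 0 ≤ c →
      (∀ s, |u s - v s| ≤ c * Real.exp (2 * S s)) →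
      ∀ t, |Φ u t - Φ v t| ≤ c / 2 * Real.exp (2 * S t) := by
    intro u v c hc hcb t
    have hdiff : Φ u t - Φ v t = ∑' p, ((if xc p < t then J (yc p) (u (xc p)) else 0)
        - (if xc p < t then J (yc p) (v (xc p)) else 0)) := by
      simp only [hΦ]
      rw [Summable.tsum_sub (hsummand u t) (hsummand v t)]
      ring
    set G : Λ → ℝ := fun p => if xc p < t then L p * (c * Real.exp (2 * S (xc p))) else 0 with hG
    have hGsum : Summable G := by
      refine summable_of_abs_le (hLsum.mul_right (c * E)) (fun p => ?_)
      simp only [hG]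
      split
      · rw [abs_of_nonneg (mul_nonneg (hLnn p) (mul_nonneg hc (Real.exp_pos _).le))]
        refine mul_le_mul_of_nonneg_left ?_ (hLnn p)
        exact mul_le_mul_of_nonneg_left (hexpE _) hc
      · simpa using mul_nonneg (hLnn p) (by positivity)
    have h1 : |Φ u t - Φ v t| ≤ ∑' p, G p := by
      rw [hdiff]
      refine abs_tsum_le_tsum hGsum (fun p => ?_)
      by_cases hp : xc p < t
      · simp only [hG, if_pos hp]
        exact (hJlip p _ _).trans (mul_le_mul_of_nonneg_left (hcb _) (hLnn p))
      · simp only [hG, if_neg hp, sub_self, abs_zero]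
        exact le_refl 0
    have h2 : ∑' p, G p ≤ c * ((Real.exp (2 * S t) - 1) / 2) := by
      refine Summable.tsum_le_of_sum_le hGsum (fun F => ?_)
      have hsplit : ∑ p ∈ F, G p
          = ∑ p ∈ F.filter (fun p => xc p < t), L p * (c * Real.exp (2 * S (xc p))) := by
        simp only [hG]
        rw [← Finset.sum_filter]
      rw [hsplit]
      have h3 := key_sum xc L hLnn hLsum S (fun s => by rw [hS])
        (F.filter (fun p => xc p < t)) t (fun p hp => (Finset.mem_filter.1 hp).2)
      calc ∑ p ∈ F.filter (fun p => xc p < t), L p * (c * Real.exp (2 * S (xc p)))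
          = c * ∑ p ∈ F.filter (fun p => xc p < t), L p * Real.exp (2 * S (xc p)) := by
            rw [Finset.mul_sum]
            exact Finset.sum_congr rfl (fun p _ => by ring)
        _ ≤ c * ((Real.exp (2 * S t) - 1) / 2) := mul_le_mul_of_nonneg_left h3 hc
    have := hexp1 t
    calc |Φ u t - Φ v t| ≤ c * ((Real.exp (2 * S t) - 1) / 2) := h1.trans h2
      _ ≤ c / 2 * Real.exp (2 * S t) := by nlinarith
  -- basic bound for Φ
  set Dtot : ℝ := ∑' p, W p with hDtot
  have hDnn : 0 ≤ Dtot := tsum_nonneg hWnn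
  have hΦbd : ∀ (u : ℝ → ℝ) (t : ℝ), |Φ u t - a₀| ≤ Dtot := by
    intro u t
    simp only [hΦ, add_sub_cancel_left]
    refine abs_tsum_le_tsum hWsum (fun p => ?_)
    split
    · exact hJb p _
    · simpa using hWnn p
  obtain ⟨uu, hfix, huniq⟩ := fixed_point_exists S E hE0 hexp1 hexpE Φ a₀ Dtot hDnn hΦbd hcontr
  -- the solution
  set cc : Λ → ℝ := fun p => J (yc p) (uu (xc p)) with hcc
  have hccb : ∀ p, |cc p| ≤ W p := fun p => hJb p _
  set f : ℝ → ℝ := fun t => a₀ + ∑' p, if xc p ≤ t then cc p else 0 with hf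
  have hflim : ∀ s : ℝ, Tendsto f (nhdsWithin s (Set.Iio s))
      (nhds (a₀ + ∑' p, if xc p < s then cc p else 0)) := by
    intro s
    have := (jump_left_tendsto xc cc W hWsum hccb s).const_add a₀
    simpa [hf] using this
  have hfright : ∀ s : ℝ, Tendsto f (nhdsWithin s (Set.Ioi s)) (nhds (f s)) := by
    intro s
    have := (jump_right_tendsto xc cc W hWsum hccb s).const_add a₀
    simpa [hf] using this
  have hΦuu : ∀ s, Φ uu s = a₀ + ∑' p, if xc p < s then cc p else 0 := by
    intro s
    simp only [hΦ, hcc]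
  have hneB : ∀ s : ℝ, nhdsWithin s (Set.Iio s) ≠ ⊥ := fun s =>
    (inferInstance : (nhdsWithin s (Set.Iio s)).NeBot).ne'
  have hleftuu : ∀ s : ℝ, Function.leftLim f s = uu s := by
    intro s
    rw [leftLim_eq_of_tendsto (hflim s), ← hΦuu s, hfix s]
  have hjumpf : ∀ t : ℝ, jumpSum α Λ t₀ t f = ∑' p : Λ, if xc p ≤ t then cc p else 0 := by
    intro t
    rw [jumpSum]
    refine tsum_congr (fun p => ?_)
    have hx : (p : ℝ × ℝ).1 = xc p := rfl
    have hy : (p : ℝ × ℝ).2 = yc p := rfl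
    rw [hx, hy]
    by_cases hc : xc p ≤ t
    · rw [if_pos (Set.mem_Ioc.2 ⟨(hx0 p).1, hc⟩), if_pos hc, hleftuu (xc p)]
    · rw [if_neg (fun hmem => hc (Set.mem_Ioc.1 hmem).2), if_neg hc]
  have hfeq : ∀ t : ℝ, f t = a₀ + jumpSum α Λ t₀ t f := by
    intro t
    rw [hjumpf t]
  have hft0 : f t₀ = a₀ := by
    simp only [hf]
    have hz : ∀ p : Λ, (if xc p ≤ t₀ then cc p else 0) = 0 := fun p =>
      if_neg (not_le.2 (hx0 p).1)
    rw [tsum_congr hz, tsum_zero, add_zero]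
  refine ⟨f, ⟨fun u _ => hfright u, fun u _ => ⟨_, hflim u⟩⟩, fun t _ => hfeq t, hft0, ?_⟩
  intro g hgc hgeq t htmem
  set cg : Λ → ℝ := fun p => J (yc p) (Function.leftLim g (xc p)) with hcg
  have hcgb : ∀ p, |cg p| ≤ W p := fun p => hJb p _
  set vg : ℝ → ℝ := fun s => a₀ + ∑' p, if xc p < s then cg p else 0 with hvg
  have hgsum : ∀ s ∈ Set.Ico t₀ t₁, g s = a₀ + ∑' p, if xc p ≤ s then cg p else 0 := by
    intro s hs
    rw [hgeq s hs, jumpSum]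
    congr 1
    refine tsum_congr (fun p => ?_)
    have hx : (p : ℝ × ℝ).1 = xc p := rfl
    have hy : (p : ℝ × ℝ).2 = yc p := rfl
    rw [hx, hy]
    by_cases hc : xc p ≤ s
    · rw [if_pos (Set.mem_Ioc.2 ⟨(hx0 p).1, hc⟩), if_pos hc]
    · rw [if_neg (fun hmem => hc (Set.mem_Ioc.1 hmem).2), if_neg hc]
  have hgl : ∀ s : ℝ, t₀ < s → s ≤ t₁ → Function.leftLim g s = vg s := by
    intro s hs0 hs1
    refine leftLim_eq_of_tendsto ?_
    have htend : Tendsto (fun r => a₀ + ∑' p, if xc p ≤ r then cg p else 0)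
        (nhdsWithin s (Set.Iio s)) (nhds (vg s)) := by
      have := (jump_left_tendsto xc cg W hWsum hcgb s).const_add a₀
      simpa [hvg] using this
    refine htend.congr' ?_
    have hmem : Set.Ioo t₀ s ∈ nhdsWithin s (Set.Iio s) :=
      Ioo_mem_nhdsLT_of_mem ⟨hs0, le_refl s⟩
    filter_upwards [hmem] with r hr
    exact (hgsum r ⟨hr.1.le, lt_of_lt_of_le hr.2 hs1⟩).symm
  have hglp : ∀ p : Λ, Function.leftLim g (xc p) = vg (xc p) := fun p =>
    hgl (xc p) (hx0 p).1 (hx0 p).2.le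
  have hvgfix : ∀ s, Φ vg s = vg s := by
    intro s
    have h1 : Φ vg s = a₀ + ∑' p, if xc p < s then cg p else 0 := by
      simp only [hΦ]
      congr 1
      refine tsum_congr (fun p => ?_)
      by_cases hc : xc p < s
      · rw [if_pos hc, if_pos hc, ← hglp p]
      · rw [if_neg hc, if_neg hc]
    exact h1
  have hvguu : ∀ s, vg s = uu s := huniq vg hvgfix
  have hgt : g t = f t := by
    rw [hgsum t htmem]
    simp only [hf]
    congr 1
    refine tsum_congr (fun p => ?_)
    by_cases hc : xc p ≤ t
    · rw [if_pos hc, if_pos hc]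
      simp only [hcg, hcc]
      rw [hglp p, hvguu (xc p)]
    · rw [if_neg hc, if_neg hc]
  exact hgt
end

section
/- Let fₙ be the unique càdlàg function satisfying fₙ(t) = a₀ + Σ_{(x,y)∈Π, |y|≤n} 1_{(t₀,t]}(x) y^⟨−1/α(fₙ(x₋))⟩. Then for all m > n ≥ 2, ‖f_m − f_n‖_∞ ≤ exp(M Σ_{(x,y)∈Π, |y|≤n} |y|^{-1/(a,b)}) · Σ_{(x,y)∈Π, |y|>n} |y|^{-1/b}, so {fₙ} is a Cauchy sequence in (D[t₀,t₁), ‖·‖_∞). -/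
open MeasureTheory Filter Set
open Topology

lemma aux_exp_diff (u v : ℝ) :
    |Real.exp u - Real.exp v| ≤ max (Real.exp u) (Real.exp v) * |u - v| := by
  wlog h : v ≤ u with H
  · rw [abs_sub_comm, abs_sub_comm u v, max_comm]
    exact H v u (le_of_not_ge h)
  rw [abs_of_nonneg (sub_nonneg.2 (Real.exp_le_exp.2 h)), abs_of_nonneg (sub_nonneg.2 h)]
  have e1 : Real.exp v = Real.exp u * Real.exp (v - u) := by
    rw [← Real.exp_add]; ring_nf
  have e2 : (v - u) + 1 ≤ Real.exp (v - u) := Real.add_one_le_exp _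
  have e3 : 0 < Real.exp u := Real.exp_pos u
  have e4 : Real.exp u ≤ max (Real.exp u) (Real.exp v) := le_max_left _ _
  nlinarith

lemma aux_rpow_mem (y lo hi s : ℝ) (hy : 0 < y) (hs : s ∈ Set.Icc lo hi) :
    y ^ s ≤ max (y ^ lo) (y ^ hi) := by
  rw [Real.rpow_def_of_pos hy, Real.rpow_def_of_pos hy, Real.rpow_def_of_pos hy]
  rcases le_or_gt 0 (Real.log y) with hL | hL
  · exact le_max_of_le_right (Real.exp_le_exp.2 (mul_le_mul_of_nonneg_left hs.2 hL))
  · exact le_max_of_le_left (Real.exp_le_exp.2 (mul_le_mul_of_nonpos_left hs.1 hL.le))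

lemma aux_rpow_diff (y lo hi s s' : ℝ) (hy : y ≠ 0) (hs : s ∈ Set.Icc lo hi)
    (hs' : s' ∈ Set.Icc lo hi) :
    abs (|y| ^ s - |y| ^ s') ≤ max (|y| ^ lo) (|y| ^ hi) * (abs (Real.log |y|) * |s - s'|) := by
  have hy0 : 0 < |y| := abs_pos.2 hy
  have key := aux_exp_diff (Real.log |y| * s) (Real.log |y| * s')
  rw [Real.rpow_def_of_pos hy0, Real.rpow_def_of_pos hy0]
  have h1 : Real.exp (Real.log |y| * s) ≤ max (|y| ^ lo) (|y| ^ hi) := by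
    rw [← Real.rpow_def_of_pos hy0]; exact aux_rpow_mem _ _ _ _ hy0 hs
  have h2 : Real.exp (Real.log |y| * s') ≤ max (|y| ^ lo) (|y| ^ hi) := by
    rw [← Real.rpow_def_of_pos hy0]; exact aux_rpow_mem _ _ _ _ hy0 hs'
  have h3 : |Real.log |y| * s - Real.log |y| * s'| = abs (Real.log |y|) * |s - s'| := by
    rw [← mul_sub, abs_mul]
  calc |Real.exp (Real.log |y| * s) - Real.exp (Real.log |y| * s')|
      ≤ max (Real.exp (Real.log |y| * s)) (Real.exp (Real.log |y| * s'))
          * |Real.log |y| * s - Real.log |y| * s'| := key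
    _ ≤ max (|y| ^ lo) (|y| ^ hi) * (abs (Real.log |y|) * |s - s'|) := by
        rw [h3]
        exact mul_le_mul_of_nonneg_right (max_le h1 h2)
          (mul_nonneg (abs_nonneg _) (abs_nonneg _))


lemma gron1 {ι : Type*} (s : Finset ι) (g : ι → ℝ) (c : ι → ℝ)
    (hc : ∀ i ∈ s, 0 ≤ c i) :
    ∑ i ∈ s, c i * Real.exp (∑ k ∈ s.filter (fun k => g k < g i), c k)
      ≤ Real.exp (∑ i ∈ s, c i) - 1 := by
  classical
  suffices H : ∀ N : ℕ, ∀ s : Finset ι, s.card ≤ N → (∀ i ∈ s, 0 ≤ c i) →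
      ∑ i ∈ s, c i * Real.exp (∑ k ∈ s.filter (fun k => g k < g i), c k)
        ≤ Real.exp (∑ i ∈ s, c i) - 1 by
    exact H s.card s le_rfl hc
  intro N
  induction N with
  | zero =>
    intro s hcard _
    have : s = ∅ := Finset.card_eq_zero.1 (Nat.le_zero.1 hcard)
    subst this; simp
  | succ N IH =>
  intro s hcard hc
  rcases s.eq_empty_or_nonempty with rfl | hne
  · simp
  have hine : (s.image g).Nonempty := hne.image g
  set u := (s.image g).max' hine with hu
  have hle : ∀ i ∈ s, g i ≤ u := fun i hi => Finset.le_max' _ _ (Finset.mem_image_of_mem g hi)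
  set s₁ := s.filter (fun i => g i < u) with hs₁
  set s₂ := s.filter (fun i => ¬ g i < u) with hs₂
  have hs₂ne : s₂.Nonempty := by
    obtain ⟨i, hi, hgi⟩ := Finset.mem_image.1 ((s.image g).max'_mem hine)
    exact ⟨i, Finset.mem_filter.2 ⟨hi, by rw [hgi]; exact lt_irrefl _⟩⟩
  have hcard : s₁.card < s.card := by
    apply Finset.card_lt_card
    constructor
    · exact Finset.filter_subset _ _
    · intro hsub
      obtain ⟨i, hi⟩ := hs₂ne
      have := hsub (Finset.mem_filter.1 hi).1
      exact (Finset.mem_filter.1 hi).2 (Finset.mem_filter.1 this).2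
  have hfilt1 : ∀ i ∈ s₁, s.filter (fun k => g k < g i) = s₁.filter (fun k => g k < g i) := by
    intro i hi
    have hgi : g i < u := (Finset.mem_filter.1 hi).2
    ext k
    simp only [Finset.mem_filter, hs₁]
    constructor
    · rintro ⟨hk, hki⟩; exact ⟨⟨hk, lt_trans hki hgi⟩, hki⟩
    · rintro ⟨⟨hk, _⟩, hki⟩; exact ⟨hk, hki⟩
  have hfilt2 : ∀ i ∈ s₂, s.filter (fun k => g k < g i) = s₁ := by
    intro i hi
    have hgi : g i = u := le_antisymm (hle i (Finset.mem_filter.1 hi).1)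
      (not_lt.1 (Finset.mem_filter.1 hi).2)
    rw [hs₁, hgi]
  have hsplit : ∀ f : ι → ℝ, ∑ i ∈ s, f i = ∑ i ∈ s₁, f i + ∑ i ∈ s₂, f i := by
    intro f; rw [hs₁, hs₂, Finset.sum_filter_add_sum_filter_not]
  rw [hsplit (fun i => c i * Real.exp (∑ k ∈ s.filter (fun k => g k < g i), c k)),
      hsplit c]
  set C₁ := ∑ i ∈ s₁, c i with hC₁
  set C₂ := ∑ i ∈ s₂, c i with hC₂
  have hC₂0 : 0 ≤ C₂ := Finset.sum_nonneg fun i hi => hc i (Finset.mem_filter.1 hi).1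
  have e1 : ∑ i ∈ s₁, c i * Real.exp (∑ k ∈ s.filter (fun k => g k < g i), c k)
      = ∑ i ∈ s₁, c i * Real.exp (∑ k ∈ s₁.filter (fun k => g k < g i), c k) := by
    apply Finset.sum_congr rfl; intro i hi; rw [hfilt1 i hi]
  have e2 : ∑ i ∈ s₂, c i * Real.exp (∑ k ∈ s.filter (fun k => g k < g i), c k)
      = C₂ * Real.exp C₁ := by
    have hcg : ∀ i ∈ s₂, c i * Real.exp (∑ k ∈ s.filter (fun k => g k < g i), c k)
        = c i * Real.exp C₁ := fun i hi => by rw [hfilt2 i hi]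
    rw [Finset.sum_congr rfl hcg, ← Finset.sum_mul]
  rw [e1, e2]
  have ih := IH s₁ (by omega) (fun i hi => hc i (Finset.mem_filter.1 hi).1)
  have key : Real.exp C₁ * (1 + C₂) ≤ Real.exp (C₁ + C₂) := by
    rw [Real.exp_add]
    exact mul_le_mul_of_nonneg_left (by linarith [Real.add_one_le_exp C₂]) (Real.exp_pos C₁).le
  have := Real.exp_pos C₁
  nlinarith

lemma gron2 {ι : Type*} (s : Finset ι) (g : ι → ℝ) (c : ι → ℝ)
    (hc : ∀ i ∈ s, 0 ≤ c i) (B : ℝ) (hB : 0 ≤ B) (E : ℝ → ℝ)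
    (hE : ∀ j ∈ s, E (g j) ≤ B + ∑ k ∈ s.filter (fun k => g k < g j), c k * E (g k)) :
    ∀ j ∈ s, E (g j) ≤ B * Real.exp (∑ k ∈ s.filter (fun k => g k < g j), c k) := by
  classical
  suffices H : ∀ N : ℕ, ∀ j ∈ s, (s.filter (fun k => g k < g j)).card ≤ N →
      E (g j) ≤ B * Real.exp (∑ k ∈ s.filter (fun k => g k < g j), c k) by
    intro j hj; exact H _ j hj le_rfl
  intro N
  induction N with
  | zero =>
    intro j hj hcard
    have hempt : s.filter (fun k => g k < g j) = ∅ := Finset.card_eq_zero.1 (Nat.le_zero.1 hcard)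
    have := hE j hj
    rw [hempt] at this ⊢
    simpa using this
  | succ N IH =>
    intro j hj hcard
    set f := s.filter (fun k => g k < g j) with hf
    have hsub : ∀ k ∈ f, s.filter (fun i => g i < g k) ⊆ f.erase k := by
      intro k hk
      intro i hi
      have hik : g i < g k := (Finset.mem_filter.1 hi).2
      have hkj : g k < g j := (Finset.mem_filter.1 hk).2
      refine Finset.mem_erase.2 ⟨?_, Finset.mem_filter.2 ⟨(Finset.mem_filter.1 hi).1,
        lt_trans hik hkj⟩⟩
      rintro rfl; exact lt_irrefl _ hik
    have hIH : ∀ k ∈ f, E (g k) ≤ B * Real.exp (∑ i ∈ s.filter (fun i => g i < g k), c i) := by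
      intro k hk
      apply IH k (Finset.mem_filter.1 hk).1
      calc (s.filter (fun i => g i < g k)).card ≤ (f.erase k).card :=
            Finset.card_le_card (hsub k hk)
        _ ≤ f.card - 1 := by rw [Finset.card_erase_of_mem hk]
        _ ≤ N := by omega
    have hfilteq : ∀ k ∈ f, s.filter (fun i => g i < g k) = f.filter (fun i => g i < g k) := by
      intro k hk
      have hkj : g k < g j := (Finset.mem_filter.1 hk).2
      ext i
      simp only [Finset.mem_filter, hf]
      constructor
      · rintro ⟨hi, hik⟩; exact ⟨⟨hi, lt_trans hik hkj⟩, hik⟩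
      · rintro ⟨⟨hi, _⟩, hik⟩; exact ⟨hi, hik⟩
    calc E (g j) ≤ B + ∑ k ∈ f, c k * E (g k) := hE j hj
      _ ≤ B + ∑ k ∈ f, c k * (B * Real.exp (∑ i ∈ f.filter (fun i => g i < g k), c i)) := by
          apply add_le_add_right
          apply Finset.sum_le_sum
          intro k hk
          have h1 := hIH k hk
          rw [hfilteq k hk] at h1
          exact mul_le_mul_of_nonneg_left h1 (hc k (Finset.mem_filter.1 hk).1)
      _ = B + B * ∑ k ∈ f, c k * Real.exp (∑ i ∈ f.filter (fun i => g i < g k), c i) := by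
          rw [Finset.mul_sum]; congr 1; apply Finset.sum_congr rfl; intro k _; ring
      _ ≤ B + B * (Real.exp (∑ k ∈ f, c k) - 1) := by
          apply add_le_add_right
          exact mul_le_mul_of_nonneg_left
            (gron1 f g c fun i hi => hc i (Finset.mem_filter.1 hi).1) hB
      _ = B * Real.exp (∑ k ∈ f, c k) := by ring


lemma mconst_facts (a b : ℝ) (ha : 0 < a) (α : ℝ → ℝ) (hrange : ∀ x, α x ∈ Set.Icc a b)
    (hsmooth : ContDiff ℝ 1 α) (hbd : ∃ C, ∀ x, |deriv α x| ≤ C) :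
    0 ≤ Mconst α ∧ ∀ u v : ℝ, |(α u)⁻¹ - (α v)⁻¹| ≤ Mconst α * |u - v| := by
  obtain ⟨C, hC⟩ := hbd
  have hapos : ∀ x, 0 < α x := fun x => lt_of_lt_of_le ha (hrange x).1
  have hdiff : Differentiable ℝ α := hsmooth.differentiable one_ne_zero
  have hbdd : BddAbove (Set.range fun ξ => |deriv α ξ| / (α ξ) ^ 2) := by
    refine ⟨C / a ^ 2, ?_⟩
    rintro z ⟨x, rfl⟩
    have h1 : a ^ 2 ≤ (α x) ^ 2 := by
      apply sq_le_sq' <;> nlinarith [(hrange x).1, hapos x]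
    exact div_le_div₀ (le_trans (abs_nonneg _) (hC x)) (hC x) (by positivity) h1
  have hM : ∀ x, |deriv α x| / (α x) ^ 2 ≤ Mconst α := fun x => le_ciSup hbdd x
  have hM0 : 0 ≤ Mconst α := le_trans (by positivity) (hM 0)
  refine ⟨hM0, fun u v => ?_⟩
  have hg : ∀ x : ℝ, HasDerivAt (fun y => (α y)⁻¹) (-deriv α x / (α x) ^ 2) x := fun x =>
    ((hdiff x).hasDerivAt).inv (ne_of_gt (hapos x))
  have hbound : ∀ x ∈ (Set.univ : Set ℝ), ‖-deriv α x / (α x) ^ 2‖ ≤ Mconst α := by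
    intro x _
    rw [Real.norm_eq_abs, abs_div, abs_neg, abs_of_nonneg (sq_nonneg (α x))]
    exact hM x
  have := Convex.norm_image_sub_le_of_norm_hasDerivWithin_le (C := Mconst α)
    (fun x _ => (hg x).hasDerivWithinAt) hbound convex_univ (Set.mem_univ v) (Set.mem_univ u)
  simpa [Real.norm_eq_abs] using this

section Main

variable {a b b' t₀ t₁ a₀ : ℝ} {α : ℝ → ℝ} {Λ : Set (ℝ × ℝ)}

lemma spow_zero' (s : ℝ) : spow 0 s = 0 := by simp [spow, Real.sign_zero]

lemma spow_abs (y s : ℝ) (hy : y ≠ 0) : |spow y s| = |y| ^ s := by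
  rw [spow, abs_mul]
  rcases lt_or_gt_of_ne hy with h' | h'
  · rw [Real.sign_of_neg h']
    simp [abs_of_nonneg (Real.rpow_nonneg (abs_nonneg y) s)]
  · rw [Real.sign_of_pos h']
    simp [abs_of_nonneg (Real.rpow_nonneg (abs_nonneg y) s)]

lemma sign_abs_eq_one {y : ℝ} (hy : y ≠ 0) : |Real.sign y| = 1 := by
  rcases lt_or_gt_of_ne hy with h | h
  · simp [Real.sign_of_neg h]
  · simp [Real.sign_of_pos h]

lemma spow_sub (y s s' : ℝ) : spow y s - spow y s' = Real.sign y * (|y| ^ s - |y| ^ s') := by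
  rw [spow, spow]; ring

lemma wab_nonneg (a b y : ℝ) : 0 ≤ wab a b y := by
  refine le_max_of_le_left (mul_nonneg (Real.rpow_nonneg (abs_nonneg y) _) ?_)
  positivity

lemma wab_zero (a b : ℝ) (ha : 0 < a) (hb : 0 < b) : wab a b 0 = 0 := by
  have h1 : (-1 : ℝ) / a ≠ 0 := by
    apply div_ne_zero <;> [norm_num; exact ne_of_gt ha]
  have h2 : (-1 : ℝ) / b ≠ 0 := by
    apply div_ne_zero <;> [norm_num; exact ne_of_gt hb]
  simp [wab, Real.zero_rpow h1, Real.zero_rpow h2]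

end Main
section Key

lemma finite_small (b' : ℝ) (hb' : 0 < b') (Λ : Set (ℝ × ℝ))
    (hΛ : Summable fun p : Λ => |(↑p : ℝ × ℝ).2| ^ (-1 / b')) (R : ℝ) :
    {p : Λ | (↑p : ℝ × ℝ).2 ≠ 0 ∧ |(↑p : ℝ × ℝ).2| ≤ R}.Finite := by
  rcases le_or_gt R 0 with hR | hR
  · apply Set.Finite.subset Set.finite_empty
    rintro p ⟨h1, h2⟩
    exact absurd (abs_pos.2 h1) (not_lt.2 (le_trans h2 hR))
  · have hδ : 0 < R ^ (-1 / b') := Real.rpow_pos_of_pos hR _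
    have hcof := (hΛ.tendsto_cofinite_zero).eventually_lt_const hδ
    rw [Filter.eventually_cofinite] at hcof
    apply hcof.subset
    rintro p ⟨h1, h2⟩
    simp only [Set.mem_setOf_eq, not_lt]
    exact Real.rpow_le_rpow_of_nonpos (abs_pos.2 h1) h2
      (by rw [neg_div]; exact neg_nonpos.2 (by positivity))

lemma keyBound (a b b' t₀ t₁ a₀ : ℝ) (ha : 0 < a) (hab : a < b) (hbb' : b < b') (hb1 : b' < 1)
    (ht : t₀ < t₁) (α : ℝ → ℝ) (hrange : ∀ x, α x ∈ Set.Icc a b) (hsmooth : ContDiff ℝ 1 α)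
    (hbd : ∃ C, ∀ x, |deriv α x| ≤ C) (Λ : Set (ℝ × ℝ))
    (hsubΛ : Λ ⊆ Set.Ioo t₀ t₁ ×ˢ (Set.univ : Set ℝ))
    (hΛ : Summable fun p : Λ => |(↑p : ℝ × ℝ).2| ^ (-1 / b'))
    (F : ℕ → ℝ → ℝ)
    (hF : ∀ n : ℕ, CadlagOn (F n) t₀ t₁ ∧
      ∀ t ∈ Set.Ico t₀ t₁, F n t = a₀ + jumpSumTrunc α Λ n t₀ t (F n))
    (m n : ℕ) (hn2 : 2 ≤ n) (hnm : n < m) :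
    (⨆ t : Set.Ico t₀ t₁, |F m (t : ℝ) - F n (t : ℝ)|)
        ≤ Real.exp (Mconst α *
            ∑' p : Λ, (if |(↑p : ℝ × ℝ).2| ≤ (n : ℝ) then wab a b (↑p : ℝ × ℝ).2 else 0)) *
          ∑' p : Λ, (if (n : ℝ) < |(↑p : ℝ × ℝ).2| then |(↑p : ℝ × ℝ).2| ^ (-1 / b) else 0) := by
  classical
  have hb0 : 0 < b := ha.trans hab
  have hb'0 : 0 < b' := hb0.trans hbb'
  have hnm' : (n : ℝ) ≤ (m : ℝ) := by exact_mod_cast hnm.le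
  have hn2' : (2 : ℝ) ≤ (n : ℝ) := by exact_mod_cast hn2
  obtain ⟨hM0, hMlip⟩ := mconst_facts a b ha α hrange hsmooth hbd
  have hTfin := finite_small b' hb'0 Λ hΛ (m : ℝ)
  set Tf : Finset Λ := hTfin.toFinset with hTfdef
  have hmemT : ∀ p : Λ, p ∈ Tf ↔ ((↑p : ℝ × ℝ).2 ≠ 0 ∧ |(↑p : ℝ × ℝ).2| ≤ (m : ℝ)) :=
    fun p => Set.Finite.mem_toFinset _
  have hgT : ∀ p : Λ, (↑p : ℝ × ℝ).1 ∈ Set.Ioo t₀ t₁ := fun p => (hsubΛ p.2).1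
  -- the equation as a finite sum
  have hEqn : ∀ k : ℕ, (k : ℝ) ≤ (m : ℝ) → ∀ t ∈ Set.Ico t₀ t₁,
      F k t = a₀ + ∑ p ∈ Tf, (if |(↑p : ℝ × ℝ).2| ≤ (k : ℝ) ∧ (↑p : ℝ × ℝ).1 ∈ Set.Ioc t₀ t
        then spow (↑p : ℝ × ℝ).2 (-1 / α (Function.leftLim (F k) (↑p : ℝ × ℝ).1)) else 0) := by
    intro k hk t htmem
    rw [(hF k).2 t htmem]
    congr 1
    apply tsum_eq_sum
    intro p hp
    rw [hmemT] at hp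
    push_neg at hp
    by_cases h0 : (↑p : ℝ × ℝ).2 = 0
    · split
      · rw [h0, spow_zero']
      · rfl
    · rw [if_neg]
      rintro ⟨h1, _⟩
      exact absurd (le_trans h1 hk) (not_le.2 (hp h0))
  -- left limits as finite sums
  have hLL : ∀ k : ℕ, (k : ℝ) ≤ (m : ℝ) → ∀ x, t₀ < x → x ≤ t₁ →
      Function.leftLim (F k) x = a₀ + ∑ p ∈ Tf,
        (if |(↑p : ℝ × ℝ).2| ≤ (k : ℝ) ∧ (↑p : ℝ × ℝ).1 < x
          then spow (↑p : ℝ × ℝ).2 (-1 / α (Function.leftLim (F k) (↑p : ℝ × ℝ).1)) else 0) := by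
    intro k hk x hx0 hx1
    set P : Finset ℝ := insert t₀ (Tf.image (fun p : Λ => (↑p : ℝ × ℝ).1)) with hP
    set Q : Finset ℝ := P.filter (fun r => r < x) with hQ
    have hQne : Q.Nonempty := ⟨t₀, by simp [hQ, hP, hx0]⟩
    set s₁ := Q.max' hQne with hs₁def
    have hs₁x : s₁ < x := (Finset.mem_filter.1 (Q.max'_mem hQne)).2
    have hs₁0 : t₀ ≤ s₁ := Q.le_max' t₀ (by simp [hQ, hP, hx0])
    set cst := a₀ + ∑ p ∈ Tf,
        (if |(↑p : ℝ × ℝ).2| ≤ (k : ℝ) ∧ (↑p : ℝ × ℝ).1 < x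
          then spow (↑p : ℝ × ℝ).2 (-1 / α (Function.leftLim (F k) (↑p : ℝ × ℝ).1)) else 0)
      with hcst
    have hclaim : ∀ s ∈ Set.Ioo s₁ x, F k s = cst := by
      intro s hs
      have hst : s ∈ Set.Ico t₀ t₁ :=
        ⟨(lt_of_le_of_lt hs₁0 hs.1).le, lt_of_lt_of_le hs.2 hx1⟩
      rw [hEqn k hk s hst, hcst]
      congr 1
      apply Finset.sum_congr rfl
      intro p hp
      have hgp0 : t₀ < (↑p : ℝ × ℝ).1 := (hgT p).1
      have hiff : ((↑p : ℝ × ℝ).1 ∈ Set.Ioc t₀ s) ↔ ((↑p : ℝ × ℝ).1 < x) := by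
        rw [Set.mem_Ioc]
        constructor
        · rintro ⟨_, h2⟩; exact lt_of_le_of_lt h2 hs.2
        · intro h2
          refine ⟨hgp0, ?_⟩
          have hmem : (↑p : ℝ × ℝ).1 ∈ Q := by
            rw [hQ, Finset.mem_filter]
            refine ⟨?_, h2⟩
            rw [hP]
            exact Finset.mem_insert_of_mem (Finset.mem_image_of_mem _ hp)
          exact le_trans (Q.le_max' _ hmem) hs.1.le
      exact if_congr (and_congr Iff.rfl hiff) rfl rfl
    have hmem : Set.Ioo s₁ x ∈ nhdsWithin x (Set.Iio x) :=
      Ioo_mem_nhdsLT_of_mem ⟨hs₁x, le_rfl⟩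
    have htend : Filter.Tendsto (F k) (nhdsWithin x (Set.Iio x)) (nhds cst) := by
      have heq : F k =ᶠ[nhdsWithin x (Set.Iio x)] (fun _ => cst) :=
        Filter.eventuallyEq_of_mem hmem hclaim
      rw [Filter.tendsto_congr' heq]
      exact tendsto_const_nhds
    exact leftLim_eq_of_tendsto htend
  -- abbreviations
  set w : Λ → ℝ := fun p => if |(↑p : ℝ × ℝ).2| ≤ (n : ℝ) then wab a b (↑p : ℝ × ℝ).2 else 0
    with hwdef
  set β : Λ → ℝ := fun p =>
      if (n : ℝ) < |(↑p : ℝ × ℝ).2| then |(↑p : ℝ × ℝ).2| ^ (-1 / b) else 0 with hβdef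
  set E : ℝ → ℝ := fun x => |Function.leftLim (F m) x - Function.leftLim (F n) x| with hEdef
  have hw0 : ∀ p : Λ, 0 ≤ w p := by
    intro p; rw [hwdef]; dsimp only; split
    · exact wab_nonneg a b _
    · exact le_rfl
  have hcc0 : ∀ p : Λ, 0 ≤ Mconst α * w p := fun p => mul_nonneg hM0 (hw0 p)
  have hβ0 : ∀ p : Λ, 0 ≤ β p := by
    intro p; rw [hβdef]; dsimp only; split
    · exact Real.rpow_nonneg (abs_nonneg _) _
    · exact le_rfl
  have hβle : ∀ p : Λ, β p ≤ |(↑p : ℝ × ℝ).2| ^ (-1 / b') := by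
    intro p; rw [hβdef]; dsimp only; split
    · rename_i h
      apply Real.rpow_le_rpow_of_exponent_le (by linarith)
      rw [neg_div, neg_div, neg_le_neg_iff]
      exact one_div_le_one_div_of_le hb0 hbb'.le
    · exact Real.rpow_nonneg (abs_nonneg _) _
  have hβsum : Summable β := Summable.of_nonneg_of_le hβ0 hβle hΛ
  set B := ∑' p : Λ, β p with hBdef
  have hB0 : 0 ≤ B := tsum_nonneg hβ0
  have hBfin : ∀ S : Finset Λ, ∑ p ∈ S, β p ≤ B :=
    fun S => Summable.sum_le_tsum S (fun p _ => hβ0 p) hβsum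
  have hWeq : ∑' p : Λ, w p = ∑ p ∈ Tf, w p := by
    apply tsum_eq_sum
    intro p hp
    rw [hmemT] at hp
    push_neg at hp
    rw [hwdef]; dsimp only; split
    · rename_i h
      by_cases h0 : (↑p : ℝ × ℝ).2 = 0
      · rw [h0, wab_zero a b ha hb0]
      · exact absurd (hp h0) (not_lt.2 (le_trans h hnm'))
    · rfl
  -- bounds on exponents
  have hsmem : ∀ z : ℝ, (-1) / α z ∈ Set.Icc (-1 / a) (-1 / b) := by
    intro z
    have h1 := (hrange z).1
    have h2 := (hrange z).2
    have hz0 : 0 < α z := lt_of_lt_of_le ha h1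
    constructor
    · rw [neg_div, neg_div, neg_le_neg_iff]
      exact one_div_le_one_div_of_le ha h1
    · rw [neg_div, neg_div, neg_le_neg_iff]
      exact one_div_le_one_div_of_le hz0 h2
  -- the per-term estimate
  have hterm : ∀ p ∈ Tf,
      |spow (↑p : ℝ × ℝ).2 (-1 / α (Function.leftLim (F m) (↑p : ℝ × ℝ).1)) -
        (if |(↑p : ℝ × ℝ).2| ≤ (n : ℝ)
          then spow (↑p : ℝ × ℝ).2 (-1 / α (Function.leftLim (F n) (↑p : ℝ × ℝ).1)) else 0)|
        ≤ Mconst α * w p * E ((↑p : ℝ × ℝ).1) + β p := by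
    intro p hp
    obtain ⟨hy0, hym⟩ := (hmemT p).1 hp
    set y := (↑p : ℝ × ℝ).2
    set u := Function.leftLim (F m) (↑p : ℝ × ℝ).1 with hu
    set v := Function.leftLim (F n) (↑p : ℝ × ℝ).1 with hv
    have hE0 : 0 ≤ E ((↑p : ℝ × ℝ).1) := abs_nonneg _
    by_cases h1 : |y| ≤ (n : ℝ)
    · rw [if_pos h1]
      have hdiff := aux_rpow_diff y (-1 / a) (-1 / b) (-1 / α u) (-1 / α v) hy0
        (hsmem u) (hsmem v)
      have habs : |spow y (-1 / α u) - spow y (-1 / α v)|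
          = abs (|y| ^ (-1 / α u) - |y| ^ (-1 / α v)) := by
        rw [spow_sub, abs_mul, sign_abs_eq_one hy0, one_mul]
      set X := max (|y| ^ (-1 / a)) (|y| ^ (-1 / b)) with hX
      set L := abs (Real.log |y|) with hL
      have hX0 : 0 ≤ X := le_max_of_le_left (Real.rpow_nonneg (abs_nonneg _) _)
      have hL0 : 0 ≤ L := abs_nonneg _
      have hDlip : |(-1) / α u - (-1) / α v| ≤ Mconst α * E ((↑p : ℝ × ℝ).1) := by
        have h2 := hMlip u v
        have e1 : (-1 : ℝ) / α u = -(α u)⁻¹ := by rw [neg_div, one_div]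
        have e2 : (-1 : ℝ) / α v = -(α v)⁻¹ := by rw [neg_div, one_div]
        rw [e1, e2]
        have : -(α u)⁻¹ - -(α v)⁻¹ = -((α u)⁻¹ - (α v)⁻¹) := by ring
        rw [this, abs_neg]
        exact h2
      have hwabX : X * L ≤ wab a b y := by
        have h1L : (0 : ℝ) ≤ 1 + L := by linarith
        have : wab a b y = X * (1 + L) := by
          rw [wab, hX, hL, max_mul_of_nonneg _ _ h1L]
        rw [this]
        exact mul_le_mul_of_nonneg_left (by linarith) hX0
      have hwp : w p = wab a b y := by rw [hwdef]; dsimp only; rw [if_pos h1]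
      have step : |spow y (-1 / α u) - spow y (-1 / α v)|
          ≤ Mconst α * w p * E ((↑p : ℝ × ℝ).1) := by
        rw [habs, hwp]
        calc abs (|y| ^ (-1 / α u) - |y| ^ (-1 / α v))
            ≤ X * (L * |(-1) / α u - (-1) / α v|) := hdiff
          _ ≤ X * (L * (Mconst α * E ((↑p : ℝ × ℝ).1))) := by
              apply mul_le_mul_of_nonneg_left _ hX0
              exact mul_le_mul_of_nonneg_left hDlip hL0
          _ = (X * L) * (Mconst α * E ((↑p : ℝ × ℝ).1)) := by ring
          _ ≤ wab a b y * (Mconst α * E ((↑p : ℝ × ℝ).1)) :=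
              mul_le_mul_of_nonneg_right hwabX (mul_nonneg hM0 hE0)
          _ = Mconst α * wab a b y * E ((↑p : ℝ × ℝ).1) := by ring
      exact le_trans step (le_add_of_nonneg_right (hβ0 p))
    · rw [if_neg h1, sub_zero]
      push_neg at h1
      have h2 : (1 : ℝ) ≤ |y| := by linarith
      rw [spow_abs _ _ hy0]
      have h3 : |y| ^ ((-1) / α u) ≤ |y| ^ ((-1) / b) :=
        Real.rpow_le_rpow_of_exponent_le h2 (hsmem u).2
      have hβp : β p = |y| ^ (-1 / b) := by rw [hβdef]; dsimp only; rw [if_pos h1]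
      have hccE : 0 ≤ Mconst α * w p * E ((↑p : ℝ × ℝ).1) := mul_nonneg (hcc0 p) hE0
      rw [hβp]
      linarith
  -- the recursion for left limits
  have hErec : ∀ x, t₀ < x → x ≤ t₁ →
      E x ≤ B + ∑ p ∈ Tf.filter (fun p : Λ => (↑p : ℝ × ℝ).1 < x),
        (Mconst α * w p) * E ((↑p : ℝ × ℝ).1) := by
    intro x h0 h1
    have em := hLL m le_rfl x h0 h1
    have en := hLL n hnm' x h0 h1
    have hEx : E x = |∑ p ∈ Tf,
        ((if |(↑p : ℝ × ℝ).2| ≤ (m : ℝ) ∧ (↑p : ℝ × ℝ).1 < x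
          then spow (↑p : ℝ × ℝ).2 (-1 / α (Function.leftLim (F m) (↑p : ℝ × ℝ).1)) else 0) -
         (if |(↑p : ℝ × ℝ).2| ≤ (n : ℝ) ∧ (↑p : ℝ × ℝ).1 < x
          then spow (↑p : ℝ × ℝ).2 (-1 / α (Function.leftLim (F n) (↑p : ℝ × ℝ).1)) else 0))| := by
      rw [hEdef]; dsimp only
      rw [em, en, add_sub_add_left_eq_sub, Finset.sum_sub_distrib]
    rw [hEx]
    set s' := Tf.filter (fun p : Λ => (↑p : ℝ × ℝ).1 < x) with hs'
    have hs'sub : s' ⊆ Tf := Finset.filter_subset _ _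
    calc |∑ p ∈ Tf, ((if |(↑p : ℝ × ℝ).2| ≤ (m : ℝ) ∧ (↑p : ℝ × ℝ).1 < x
          then spow (↑p : ℝ × ℝ).2 (-1 / α (Function.leftLim (F m) (↑p : ℝ × ℝ).1)) else 0) -
         (if |(↑p : ℝ × ℝ).2| ≤ (n : ℝ) ∧ (↑p : ℝ × ℝ).1 < x
          then spow (↑p : ℝ × ℝ).2 (-1 / α (Function.leftLim (F n) (↑p : ℝ × ℝ).1)) else 0))|
        ≤ ∑ p ∈ Tf, |(if |(↑p : ℝ × ℝ).2| ≤ (m : ℝ) ∧ (↑p : ℝ × ℝ).1 < x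
          then spow (↑p : ℝ × ℝ).2 (-1 / α (Function.leftLim (F m) (↑p : ℝ × ℝ).1)) else 0) -
         (if |(↑p : ℝ × ℝ).2| ≤ (n : ℝ) ∧ (↑p : ℝ × ℝ).1 < x
          then spow (↑p : ℝ × ℝ).2 (-1 / α (Function.leftLim (F n) (↑p : ℝ × ℝ).1)) else 0)| :=
          Finset.abs_sum_le_sum_abs _ _
      _ = ∑ p ∈ s', |(if |(↑p : ℝ × ℝ).2| ≤ (m : ℝ) ∧ (↑p : ℝ × ℝ).1 < x
          then spow (↑p : ℝ × ℝ).2 (-1 / α (Function.leftLim (F m) (↑p : ℝ × ℝ).1)) else 0) -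
         (if |(↑p : ℝ × ℝ).2| ≤ (n : ℝ) ∧ (↑p : ℝ × ℝ).1 < x
          then spow (↑p : ℝ × ℝ).2 (-1 / α (Function.leftLim (F n) (↑p : ℝ × ℝ).1)) else 0)| := by
          symm
          apply Finset.sum_subset hs'sub
          intro p hpT hps'
          have hnx : ¬ ((↑p : ℝ × ℝ).1 < x) := by
            intro hcon
            exact hps' (Finset.mem_filter.2 ⟨hpT, hcon⟩)
          rw [if_neg (fun h => hnx h.2), if_neg (fun h => hnx h.2), sub_zero, abs_zero]
      _ ≤ ∑ p ∈ s', ((Mconst α * w p) * E ((↑p : ℝ × ℝ).1) + β p) := by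
          apply Finset.sum_le_sum
          intro p hps'
          obtain ⟨hpT, hpx⟩ := Finset.mem_filter.1 hps'
          obtain ⟨hy0, hym⟩ := (hmemT p).1 hpT
          rw [if_pos ⟨hym, hpx⟩]
          have : (if |(↑p : ℝ × ℝ).2| ≤ (n : ℝ) ∧ (↑p : ℝ × ℝ).1 < x
              then spow (↑p : ℝ × ℝ).2 (-1 / α (Function.leftLim (F n) (↑p : ℝ × ℝ).1)) else 0)
              = (if |(↑p : ℝ × ℝ).2| ≤ (n : ℝ)
              then spow (↑p : ℝ × ℝ).2 (-1 / α (Function.leftLim (F n) (↑p : ℝ × ℝ).1)) else 0) := by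
            by_cases h1 : |(↑p : ℝ × ℝ).2| ≤ (n : ℝ)
            · rw [if_pos ⟨h1, hpx⟩, if_pos h1]
            · rw [if_neg (fun h => h1 h.1), if_neg h1]
          rw [this]
          exact hterm p hpT
      _ = ∑ p ∈ s', (Mconst α * w p) * E ((↑p : ℝ × ℝ).1) + ∑ p ∈ s', β p :=
          Finset.sum_add_distrib
      _ ≤ ∑ p ∈ s', (Mconst α * w p) * E ((↑p : ℝ × ℝ).1) + B :=
          add_le_add_right (hBfin s') _
      _ = B + ∑ p ∈ s', (Mconst α * w p) * E ((↑p : ℝ × ℝ).1) := by ring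
  -- Gronwall for the left limits
  have hgron : ∀ j ∈ Tf, E ((↑j : ℝ × ℝ).1) ≤ B * Real.exp
      (∑ k ∈ Tf.filter (fun k : Λ => (↑k : ℝ × ℝ).1 < (↑j : ℝ × ℝ).1), Mconst α * w k) := by
    apply gron2 Tf (fun p : Λ => (↑p : ℝ × ℝ).1) (fun p => Mconst α * w p)
      (fun i _ => hcc0 i) B hB0 E
    intro j _
    exact hErec ((↑j : ℝ × ℝ).1) (hgT j).1 (hgT j).2.le
  -- final bound for each t
  have hfinal : ∀ t ∈ Set.Ico t₀ t₁,
      |F m t - F n t| ≤ B * Real.exp (∑ p ∈ Tf, Mconst α * w p) := by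
    intro t htmem
    have em := hEqn m le_rfl t htmem
    have en := hEqn n hnm' t htmem
    set s' := Tf.filter (fun p : Λ => (↑p : ℝ × ℝ).1 ≤ t) with hs'
    have hs'sub : s' ⊆ Tf := Finset.filter_subset _ _
    have hstep : |F m t - F n t| ≤ B + ∑ p ∈ s', (Mconst α * w p) * E ((↑p : ℝ × ℝ).1) := by
      have hFx : F m t - F n t = ∑ p ∈ Tf,
          ((if |(↑p : ℝ × ℝ).2| ≤ (m : ℝ) ∧ (↑p : ℝ × ℝ).1 ∈ Set.Ioc t₀ t
            then spow (↑p : ℝ × ℝ).2 (-1 / α (Function.leftLim (F m) (↑p : ℝ × ℝ).1)) else 0) -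
           (if |(↑p : ℝ × ℝ).2| ≤ (n : ℝ) ∧ (↑p : ℝ × ℝ).1 ∈ Set.Ioc t₀ t
            then spow (↑p : ℝ × ℝ).2 (-1 / α (Function.leftLim (F n) (↑p : ℝ × ℝ).1)) else 0)) := by
        rw [em, en, add_sub_add_left_eq_sub, Finset.sum_sub_distrib]
      rw [hFx]
      calc |∑ p ∈ Tf, ((if |(↑p : ℝ × ℝ).2| ≤ (m : ℝ) ∧ (↑p : ℝ × ℝ).1 ∈ Set.Ioc t₀ t
            then spow (↑p : ℝ × ℝ).2 (-1 / α (Function.leftLim (F m) (↑p : ℝ × ℝ).1)) else 0) -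
           (if |(↑p : ℝ × ℝ).2| ≤ (n : ℝ) ∧ (↑p : ℝ × ℝ).1 ∈ Set.Ioc t₀ t
            then spow (↑p : ℝ × ℝ).2 (-1 / α (Function.leftLim (F n) (↑p : ℝ × ℝ).1)) else 0))|
          ≤ ∑ p ∈ Tf, |(if |(↑p : ℝ × ℝ).2| ≤ (m : ℝ) ∧ (↑p : ℝ × ℝ).1 ∈ Set.Ioc t₀ t
            then spow (↑p : ℝ × ℝ).2 (-1 / α (Function.leftLim (F m) (↑p : ℝ × ℝ).1)) else 0) -
           (if |(↑p : ℝ × ℝ).2| ≤ (n : ℝ) ∧ (↑p : ℝ × ℝ).1 ∈ Set.Ioc t₀ t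
            then spow (↑p : ℝ × ℝ).2 (-1 / α (Function.leftLim (F n) (↑p : ℝ × ℝ).1)) else 0)| :=
            Finset.abs_sum_le_sum_abs _ _
        _ = ∑ p ∈ s', |(if |(↑p : ℝ × ℝ).2| ≤ (m : ℝ) ∧ (↑p : ℝ × ℝ).1 ∈ Set.Ioc t₀ t
            then spow (↑p : ℝ × ℝ).2 (-1 / α (Function.leftLim (F m) (↑p : ℝ × ℝ).1)) else 0) -
           (if |(↑p : ℝ × ℝ).2| ≤ (n : ℝ) ∧ (↑p : ℝ × ℝ).1 ∈ Set.Ioc t₀ t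
            then spow (↑p : ℝ × ℝ).2 (-1 / α (Function.leftLim (F n) (↑p : ℝ × ℝ).1)) else 0)| := by
            symm
            apply Finset.sum_subset hs'sub
            intro p hpT hps'
            have hnx : ¬ ((↑p : ℝ × ℝ).1 ≤ t) := by
              intro hcon
              exact hps' (Finset.mem_filter.2 ⟨hpT, hcon⟩)
            rw [if_neg (fun h => hnx h.2.2), if_neg (fun h => hnx h.2.2), sub_zero, abs_zero]
        _ ≤ ∑ p ∈ s', ((Mconst α * w p) * E ((↑p : ℝ × ℝ).1) + β p) := by
            apply Finset.sum_le_sum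
            intro p hps'
            obtain ⟨hpT, hpt⟩ := Finset.mem_filter.1 hps'
            obtain ⟨hy0, hym⟩ := (hmemT p).1 hpT
            have hioc : (↑p : ℝ × ℝ).1 ∈ Set.Ioc t₀ t := ⟨(hgT p).1, hpt⟩
            rw [if_pos ⟨hym, hioc⟩]
            have : (if |(↑p : ℝ × ℝ).2| ≤ (n : ℝ) ∧ (↑p : ℝ × ℝ).1 ∈ Set.Ioc t₀ t
                then spow (↑p : ℝ × ℝ).2 (-1 / α (Function.leftLim (F n) (↑p : ℝ × ℝ).1)) else 0)
                = (if |(↑p : ℝ × ℝ).2| ≤ (n : ℝ)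
                then spow (↑p : ℝ × ℝ).2 (-1 / α (Function.leftLim (F n) (↑p : ℝ × ℝ).1)) else 0) := by
              by_cases h1 : |(↑p : ℝ × ℝ).2| ≤ (n : ℝ)
              · rw [if_pos ⟨h1, hioc⟩, if_pos h1]
              · rw [if_neg (fun h => h1 h.1), if_neg h1]
            rw [this]
            exact hterm p hpT
        _ = ∑ p ∈ s', (Mconst α * w p) * E ((↑p : ℝ × ℝ).1) + ∑ p ∈ s', β p :=
            Finset.sum_add_distrib
        _ ≤ ∑ p ∈ s', (Mconst α * w p) * E ((↑p : ℝ × ℝ).1) + B :=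
            add_le_add_right (hBfin s') _
        _ = B + ∑ p ∈ s', (Mconst α * w p) * E ((↑p : ℝ × ℝ).1) := by ring
    have hstep2 : ∑ p ∈ s', (Mconst α * w p) * E ((↑p : ℝ × ℝ).1)
        ≤ B * (Real.exp (∑ p ∈ s', Mconst α * w p) - 1) := by
      calc ∑ p ∈ s', (Mconst α * w p) * E ((↑p : ℝ × ℝ).1)
          ≤ ∑ p ∈ s', (Mconst α * w p) * (B * Real.exp
              (∑ k ∈ s'.filter (fun k : Λ => (↑k : ℝ × ℝ).1 < (↑p : ℝ × ℝ).1), Mconst α * w k)) := by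
            apply Finset.sum_le_sum
            intro p hps'
            obtain ⟨hpT, hpt⟩ := Finset.mem_filter.1 hps'
            have hfeq : Tf.filter (fun k : Λ => (↑k : ℝ × ℝ).1 < (↑p : ℝ × ℝ).1)
                = s'.filter (fun k : Λ => (↑k : ℝ × ℝ).1 < (↑p : ℝ × ℝ).1) := by
              ext k
              simp only [Finset.mem_filter, hs']
              constructor
              · rintro ⟨hk, hkp⟩; exact ⟨⟨hk, le_trans hkp.le hpt⟩, hkp⟩
              · rintro ⟨⟨hk, _⟩, hkp⟩; exact ⟨hk, hkp⟩
            have := hgron p hpT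
            rw [hfeq] at this
            exact mul_le_mul_of_nonneg_left this (hcc0 p)
        _ = B * ∑ p ∈ s', (Mconst α * w p) * Real.exp
              (∑ k ∈ s'.filter (fun k : Λ => (↑k : ℝ × ℝ).1 < (↑p : ℝ × ℝ).1), Mconst α * w k) := by
            rw [Finset.mul_sum]; apply Finset.sum_congr rfl; intro p _; ring
        _ ≤ B * (Real.exp (∑ p ∈ s', Mconst α * w p) - 1) := by
            apply mul_le_mul_of_nonneg_left _ hB0
            exact gron1 s' (fun p : Λ => (↑p : ℝ × ℝ).1) (fun p => Mconst α * w p)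
              (fun i _ => hcc0 i)
    have hsum_le : ∑ p ∈ s', Mconst α * w p ≤ ∑ p ∈ Tf, Mconst α * w p :=
      Finset.sum_le_sum_of_subset_of_nonneg hs'sub (fun i _ _ => hcc0 i)
    calc |F m t - F n t| ≤ B + ∑ p ∈ s', (Mconst α * w p) * E ((↑p : ℝ × ℝ).1) := hstep
      _ ≤ B + B * (Real.exp (∑ p ∈ s', Mconst α * w p) - 1) := add_le_add_right hstep2 _
      _ = B * Real.exp (∑ p ∈ s', Mconst α * w p) := by ring
      _ ≤ B * Real.exp (∑ p ∈ Tf, Mconst α * w p) :=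
          mul_le_mul_of_nonneg_left (Real.exp_le_exp.2 hsum_le) hB0
  -- conclude with the supremum
  have hTsum : ∑ p ∈ Tf, Mconst α * w p = Mconst α * ∑' p : Λ, w p := by
    rw [hWeq, Finset.mul_sum]
  haveI : Nonempty (Set.Ico t₀ t₁) := ⟨⟨t₀, le_rfl, ht⟩⟩
  apply ciSup_le
  intro t'
  calc |F m (t' : ℝ) - F n (t' : ℝ)| ≤ B * Real.exp (∑ p ∈ Tf, Mconst α * w p) :=
      hfinal (t' : ℝ) t'.2
    _ = Real.exp (Mconst α * ∑' p : Λ, w p) * B := by rw [hTsum]; ring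

end Key

section Part2

lemma wab_le_of_one_le (a b b' y : ℝ) (ha : 0 < a) (hab : a < b) (hbb' : b < b')
    (hy : 1 ≤ |y|) :
    wab a b y ≤ (1 + 1 / (1 / b - 1 / b')) * |y| ^ (-1 / b') := by
  have hb0 : 0 < b := ha.trans hab
  have hb'0 : 0 < b' := hb0.trans hbb'
  have hδ : 0 < 1 / b - 1 / b' := sub_pos.2 (one_div_lt_one_div_of_lt hb0 hbb')
  set δ := 1 / b - 1 / b' with hδdef
  have hy0 : (0 : ℝ) < |y| := lt_of_lt_of_le zero_lt_one hy
  have hL0 : 0 ≤ Real.log |y| := Real.log_nonneg hy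
  have hLabs : abs (Real.log (abs y)) = Real.log |y| := abs_of_nonneg hL0
  have hab' : |y| ^ (-1 / a) ≤ |y| ^ (-1 / b) := by
    apply Real.rpow_le_rpow_of_exponent_le hy
    rw [neg_div, neg_div, neg_le_neg_iff]
    exact one_div_le_one_div_of_le ha hab.le
  have h1L : (0 : ℝ) ≤ 1 + Real.log |y| := by linarith
  have hwab : wab a b y ≤ |y| ^ (-1 / b) * (1 + Real.log |y|) := by
    rw [wab, hLabs]
    exact max_le (mul_le_mul_of_nonneg_right hab' h1L) le_rfl
  have hlog : Real.log |y| ≤ |y| ^ δ / δ := Real.log_le_rpow_div (abs_nonneg y) hδ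
  have hrp1 : (1 : ℝ) ≤ |y| ^ δ := by
    rw [show (1 : ℝ) = |y| ^ (0 : ℝ) from (Real.rpow_zero _).symm]
    exact Real.rpow_le_rpow_of_exponent_le hy hδ.le
  have h2 : 1 + Real.log |y| ≤ (1 + 1 / δ) * |y| ^ δ := by
    have : |y| ^ δ / δ = (1 / δ) * |y| ^ δ := by ring
    nlinarith
  have h3 : |y| ^ (-1 / b) * (1 + Real.log |y|)
      ≤ |y| ^ (-1 / b) * ((1 + 1 / δ) * |y| ^ δ) :=
    mul_le_mul_of_nonneg_left h2 (Real.rpow_nonneg (abs_nonneg _) _)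
  have h4 : |y| ^ (-1 / b) * ((1 + 1 / δ) * |y| ^ δ)
      = (1 + 1 / δ) * |y| ^ (-1 / b + δ) := by
    rw [Real.rpow_add hy0]; ring
  have h5 : -1 / b + δ = -1 / b' := by rw [hδdef]; ring
  calc wab a b y ≤ |y| ^ (-1 / b) * (1 + Real.log |y|) := hwab
    _ ≤ |y| ^ (-1 / b) * ((1 + 1 / δ) * |y| ^ δ) := h3
    _ = (1 + 1 / δ) * |y| ^ (-1 / b + δ) := h4
    _ = (1 + 1 / δ) * |y| ^ (-1 / b') := by rw [h5]

end Part2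

/-- The truncated solutions form a Cauchy sequence in the supremum norm, with the explicit
exponential bound for m > n ≥ 2. -/
theorem stmt6 (a b b' t₀ t₁ a₀ : ℝ) (ha : 0 < a) (hab : a < b) (hbb' : b < b') (hb1 : b' < 1)
    (ht : t₀ < t₁)
    (α : ℝ → ℝ) (hrange : ∀ x, α x ∈ Set.Icc a b) (hsmooth : ContDiff ℝ 1 α)
    (hbd : ∃ C, ∀ x, |deriv α x| ≤ C)
    (Λ : Set (ℝ × ℝ)) (hcount : Λ.Countable)
    (hsubΛ : Λ ⊆ Set.Ioo t₀ t₁ ×ˢ (Set.univ : Set ℝ))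
    (hΛ : Summable fun p : Λ => |(p : ℝ × ℝ).2| ^ (-1 / b'))
    (F : ℕ → ℝ → ℝ)
    (hF : ∀ n : ℕ, CadlagOn (F n) t₀ t₁ ∧
      ∀ t ∈ Set.Ico t₀ t₁, F n t = a₀ + jumpSumTrunc α Λ n t₀ t (F n)) :
    (∀ m n : ℕ, 2 ≤ n → n < m →
      (⨆ t : Set.Ico t₀ t₁, |F m (t : ℝ) - F n (t : ℝ)|)
        ≤ Real.exp (Mconst α *
            ∑' p : Λ, (if |(p : ℝ × ℝ).2| ≤ (n : ℝ) then wab a b (p : ℝ × ℝ).2 else 0)) *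
          ∑' p : Λ, (if (n : ℝ) < |(p : ℝ × ℝ).2| then |(p : ℝ × ℝ).2| ^ (-1 / b) else 0)) ∧
    ∀ ε : ℝ, 0 < ε → ∃ N : ℕ, ∀ m n : ℕ, N ≤ m → N ≤ n →
      (⨆ t : Set.Ico t₀ t₁, |F m (t : ℝ) - F n (t : ℝ)|) ≤ ε := by
  classical
  have key := keyBound a b b' t₀ t₁ a₀ ha hab hbb' hb1 ht α hrange hsmooth hbd Λ hsubΛ hΛ F hF
  refine ⟨key, ?_⟩
  intro ε hε
  have hb0 : 0 < b := ha.trans hab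
  have hb'0 : 0 < b' := hb0.trans hbb'
  obtain ⟨hM0, -⟩ := mconst_facts a b ha α hrange hsmooth hbd
  set cf : Λ → ℝ := fun p => |(↑p : ℝ × ℝ).2| ^ (-1 / b') with hcf
  have hcf0 : ∀ p : Λ, 0 ≤ cf p := fun p => Real.rpow_nonneg (abs_nonneg _) _
  -- summability of the full wab sum
  have hδ : 0 < 1 / b - 1 / b' := sub_pos.2 (one_div_lt_one_div_of_lt hb0 hbb')
  set K₀ : ℝ := 1 + 1 / (1 / b - 1 / b') with hK₀
  have hK₀0 : 0 ≤ K₀ := by positivity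
  have hT1fin := finite_small b' hb'0 Λ hΛ 1
  have hwabsum : Summable (fun p : Λ => wab a b (↑p : ℝ × ℝ).2) := by
    set f1 : Λ → ℝ := fun p => if |(↑p : ℝ × ℝ).2| < 1 then wab a b (↑p : ℝ × ℝ).2 else 0
      with hf1
    have hf1sum : Summable f1 := by
      apply summable_of_ne_finset_zero (s := hT1fin.toFinset)
      intro p hp
      rw [Set.Finite.mem_toFinset] at hp
      simp only [Set.mem_setOf_eq] at hp
      push_neg at hp
      rw [hf1]; dsimp only
      by_cases h0 : (↑p : ℝ × ℝ).2 = 0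
      · rw [h0]
        split
        · exact wab_zero a b ha hb0
        · rfl
      · rw [if_neg (not_lt.2 (le_of_lt (hp h0)))]
    have hf2sum : Summable (fun p : Λ => K₀ * cf p) := hΛ.mul_left K₀
    refine Summable.of_nonneg_of_le (fun p => wab_nonneg a b _) ?_ (hf1sum.add hf2sum)
    intro p
    rw [hf1]; dsimp only
    by_cases h1 : |(↑p : ℝ × ℝ).2| < 1
    · rw [if_pos h1]
      exact le_add_of_nonneg_right (mul_nonneg hK₀0 (hcf0 p))
    · rw [if_neg h1, zero_add]
      exact wab_le_of_one_le a b b' _ ha hab hbb' (not_lt.1 h1)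
  set Wall := ∑' p : Λ, wab a b (↑p : ℝ × ℝ).2 with hWall
  set K := Real.exp (Mconst α * Wall) with hK
  have hKpos : 0 < K := Real.exp_pos _
  have hexp_le : ∀ n : ℕ,
      Real.exp (Mconst α * ∑' p : Λ,
        (if |(↑p : ℝ × ℝ).2| ≤ (n : ℝ) then wab a b (↑p : ℝ × ℝ).2 else 0)) ≤ K := by
    intro n
    rw [hK]
    apply Real.exp_le_exp.2
    apply mul_le_mul_of_nonneg_left _ hM0
    apply Summable.tsum_le_tsum _ _ hwabsum
    · intro p
      split
      · exact le_rfl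
      · exact wab_nonneg a b _
    · apply Summable.of_nonneg_of_le _ _ hwabsum
      · intro p; split
        · exact wab_nonneg a b _
        · exact le_rfl
      · intro p; split
        · exact le_rfl
        · exact wab_nonneg a b _
  set ε' := ε / K with hε'
  have hε'0 : 0 < ε' := div_pos hε hKpos
  obtain ⟨T, hT⟩ : ∃ T : Finset Λ, (∑' p : Λ, cf p) - ε' < ∑ p ∈ T, cf p := by
    have hlt : (∑' p : Λ, cf p) - ε' < ∑' p : Λ, cf p := by linarith
    exact (hΛ.hasSum.eventually (eventually_gt_nhds hlt)).exists
  obtain ⟨R, hR⟩ : ∃ R : ℝ, ∀ p ∈ T, |(↑p : ℝ × ℝ).2| ≤ R := by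
    obtain ⟨R, hR⟩ := (T.image fun p : Λ => |(↑p : ℝ × ℝ).2|).exists_le
    exact ⟨R, fun p hp => hR _ (Finset.mem_image_of_mem _ hp)⟩
  obtain ⟨N₀, hN₀⟩ := exists_nat_ge R
  refine ⟨max 2 N₀, ?_⟩
  have hN2 : 2 ≤ max 2 N₀ := le_max_left _ _
  -- the tail bound
  have hC : ∀ k : ℕ, max 2 N₀ ≤ k →
      (∑' p : Λ, (if (k : ℝ) < |(↑p : ℝ × ℝ).2| then |(↑p : ℝ × ℝ).2| ^ (-1 / b) else 0))
        ≤ ε' := by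
    intro k hk
    have hk2 : (2 : ℝ) ≤ (k : ℝ) := by exact_mod_cast le_trans hN2 hk
    have hkR : R ≤ (k : ℝ) := by
      calc R ≤ (N₀ : ℝ) := hN₀
        _ ≤ ((max 2 N₀ : ℕ) : ℝ) := by exact_mod_cast le_max_right 2 N₀
        _ ≤ (k : ℝ) := by exact_mod_cast hk
    set βk : Λ → ℝ := fun p =>
      if (k : ℝ) < |(↑p : ℝ × ℝ).2| then |(↑p : ℝ × ℝ).2| ^ (-1 / b) else 0 with hβk
    set hcomp : Λ → ℝ := fun p => if p ∈ T then 0 else cf p with hhcomp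
    have hcomp0 : ∀ p, 0 ≤ hcomp p := by
      intro p; rw [hhcomp]; dsimp only; split
      · exact le_rfl
      · exact hcf0 p
    have hcomple : ∀ p, hcomp p ≤ cf p := by
      intro p; rw [hhcomp]; dsimp only; split
      · exact hcf0 p
      · exact le_rfl
    have hcompsum : Summable hcomp := Summable.of_nonneg_of_le hcomp0 hcomple hΛ
    have hβk0 : ∀ p, 0 ≤ βk p := by
      intro p; rw [hβk]; dsimp only; split
      · exact Real.rpow_nonneg (abs_nonneg _) _
      · exact le_rfl
    have hβkle : ∀ p, βk p ≤ hcomp p := by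
      intro p
      rw [hβk, hhcomp]; dsimp only
      by_cases h1 : (k : ℝ) < |(↑p : ℝ × ℝ).2|
      · rw [if_pos h1]
        have hpT : p ∉ T := by
          intro hpmem
          exact absurd (le_trans (hR p hpmem) hkR) (not_le.2 h1)
        rw [if_neg hpT]
        apply Real.rpow_le_rpow_of_exponent_le (by linarith)
        rw [neg_div, neg_div, neg_le_neg_iff]
        exact one_div_le_one_div_of_le hb0 hbb'.le
      · rw [if_neg h1]
        exact hcomp0 p
    have hβksum : Summable βk := Summable.of_nonneg_of_le hβk0 hβkle hcompsum
    have hsplit : ∑' p : Λ, hcomp p = (∑' p : Λ, cf p) - ∑ p ∈ T, cf p := by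
      have hind : Summable (fun p : Λ => if p ∈ T then cf p else 0) :=
        summable_of_ne_finset_zero (s := T) (fun p hp => if_neg hp)
      have hfun : (fun p : Λ => cf p) = fun p => hcomp p + (if p ∈ T then cf p else 0) := by
        funext p
        rw [hhcomp]; dsimp only
        by_cases h1 : p ∈ T
        · rw [if_pos h1, if_pos h1, zero_add]
        · rw [if_neg h1, if_neg h1, add_zero]
      have htsum : ∑' p : Λ, cf p
          = (∑' p : Λ, hcomp p) + ∑' p : Λ, (if p ∈ T then cf p else 0) := by
        rw [hfun]
        exact Summable.tsum_add hcompsum hind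
      have hind_eq : ∑' p : Λ, (if p ∈ T then cf p else 0) = ∑ p ∈ T, cf p := by
        rw [tsum_eq_sum (s := T) (fun p hp => if_neg hp)]
        exact Finset.sum_congr rfl (fun p hp => if_pos hp)
      rw [hind_eq] at htsum
      linarith
    calc ∑' p : Λ, βk p ≤ ∑' p : Λ, hcomp p := Summable.tsum_le_tsum hβkle hβksum hcompsum
      _ = (∑' p : Λ, cf p) - ∑ p ∈ T, cf p := hsplit
      _ ≤ ε' := by linarith
  -- the main Cauchy estimate
  have hfin2 : ∀ m n : ℕ, max 2 N₀ ≤ n → n < m →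
      (⨆ t : Set.Ico t₀ t₁, |F m (t : ℝ) - F n (t : ℝ)|) ≤ ε := by
    intro m n hn hmn
    have hn2 : 2 ≤ n := le_trans (le_max_left 2 N₀) hn
    have hBn0 : 0 ≤ ∑' p : Λ,
        (if (n : ℝ) < |(↑p : ℝ × ℝ).2| then |(↑p : ℝ × ℝ).2| ^ (-1 / b) else 0) := by
      apply tsum_nonneg
      intro p; split
      · exact Real.rpow_nonneg (abs_nonneg _) _
      · exact le_rfl
    calc (⨆ t : Set.Ico t₀ t₁, |F m (t : ℝ) - F n (t : ℝ)|)
        ≤ Real.exp (Mconst α * ∑' p : Λ,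
            (if |(↑p : ℝ × ℝ).2| ≤ (n : ℝ) then wab a b (↑p : ℝ × ℝ).2 else 0)) *
          ∑' p : Λ, (if (n : ℝ) < |(↑p : ℝ × ℝ).2| then |(↑p : ℝ × ℝ).2| ^ (-1 / b) else 0) :=
          key m n hn2 hmn
      _ ≤ K * ∑' p : Λ,
            (if (n : ℝ) < |(↑p : ℝ × ℝ).2| then |(↑p : ℝ × ℝ).2| ^ (-1 / b) else 0) :=
          mul_le_mul_of_nonneg_right (hexp_le n) hBn0
      _ ≤ K * ε' := mul_le_mul_of_nonneg_left (hC n hn) hKpos.le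
      _ = ε := by rw [hε']; field_simp
  intro m n hm hn
  rcases lt_trichotomy n m with h | h | h
  · exact hfin2 m n hn h
  · subst h
    haveI : Nonempty (Set.Ico t₀ t₁) := ⟨⟨t₀, le_rfl, ht⟩⟩
    have hzero : (⨆ t : Set.Ico t₀ t₁, |F n (t : ℝ) - F n (t : ℝ)|) = 0 := by
      simp [sub_self, ciSup_const]
    rw [hzero]
    exact hε.le
  · have hswap : (⨆ t : Set.Ico t₀ t₁, |F m (t : ℝ) - F n (t : ℝ)|)
        = (⨆ t : Set.Ico t₀ t₁, |F n (t : ℝ) - F m (t : ℝ)|) := by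
      congr 1
      funext t
      rw [abs_sub_comm]
    rw [hswap]
    exact hfin2 n m hm h
end
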